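/- arXiv:2003.08878 — 7 statements merged into one kernel-verified Lean document; each statement's English description precedes it below -/
import Mathlib

section
/- Let R be a commutative ring, I an ideal of R, and x an element of R. For all natural numbers n ≥ m, we have (x^n) ∩ x^m·(I : x^∞) = x^n·(I : x^∞), where (I : x^∞) = ⋃_{k≥1} (I : x^k) denotes the saturation of I with respect to x. -/
/-- The saturation `I : x^∞ = ⋃ k, (I : x^k)`. -/
noncomputable def satur {R : Type*} [CommRing R] (I : Ideal R) (x : R) : Ideal R :=
  ⨆ k : ℕ, Submodule.colon I (Ideal.span {x ^ k})

lemma mem_satur_iff {R : Type*} [CommRing R] (I : Ideal R) (x : R) (r : R) :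
    r ∈ satur I x ↔ ∃ k : ℕ, x ^ k * r ∈ I := by
  have hdir : Directed (· ≤ ·) (fun k : ℕ => Submodule.colon I (Ideal.span {x ^ k})) := by
    intro a b
    refine ⟨a + b, ?_, ?_⟩ <;>
    · intro r hr
      dsimp only at hr ⊢
      rw [Ideal.mem_colon_span_singleton] at hr ⊢
      rw [pow_add]
      first
        | (rw [← mul_assoc]; exact I.mul_mem_right _ hr)
        | (rw [mul_comm (x ^ a), ← mul_assoc]; exact I.mul_mem_right _ hr)
  rw [satur, Submodule.mem_iSup_of_directed _ hdir]
  simp only [Ideal.mem_colon_span_singleton]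
  exact ⟨fun ⟨i, hi⟩ => ⟨i, by rwa [mul_comm]⟩, fun ⟨i, hi⟩ => ⟨i, by rwa [mul_comm]⟩⟩

theorem stmt0 {R : Type*} [CommRing R] (I : Ideal R) (x : R) (m n : ℕ) (h : m ≤ n) :
    Ideal.span {x ^ n} ⊓ (Ideal.span {x ^ m} * satur I x)
      = Ideal.span {x ^ n} * satur I x := by
  apply le_antisymm
  · intro a ha
    rw [Submodule.mem_inf] at ha
    obtain ⟨ha1, ha2⟩ := ha
    rw [Ideal.mem_span_singleton_mul] at ha2
    obtain ⟨s, hs, hsa⟩ := ha2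
    rw [Ideal.mem_span_singleton'] at ha1
    obtain ⟨r, hr⟩ := ha1
    obtain ⟨k, hk⟩ := (mem_satur_iff I x s).mp hs
    rw [Ideal.mem_span_singleton_mul]
    refine ⟨r, ?_, by rw [mul_comm]; exact hr⟩
    rw [mem_satur_iff]
    refine ⟨k + n, ?_⟩
    have ha : x ^ k * a ∈ I := by
      rw [← hsa, show x ^ k * (x ^ m * s) = x ^ m * (x ^ k * s) by ring]
      exact I.mul_mem_left _ hk
    have : x ^ (k + n) * r = x ^ k * a := by rw [← hr]; ring
    rwa [this]
  · apply le_inf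
    · exact Ideal.mul_le_left
    · exact Ideal.mul_mono_left (Ideal.span_singleton_le_span_singleton.mpr
        (pow_dvd_pow x h))
end

section
/- Let R be a commutative ring, I an ideal, and x ∈ R. For all integers n, m, α with n + 1 ≥ α > m ≥ 1, one has (x^m) ∩ ( Σ_{i=0}^{m-2} x^i·(I^{n-i} : x^∞) + x^{m-1}·(I^{n+1-α} : x^∞) ) = x^m·(I^{n+1-α} : x^∞). -/
lemma mem_satur_aux {R : Type*} [CommRing R] {I : Ideal R} {x r : R} :
    r ∈ (⨆ k : ℕ, Submodule.colon I (Ideal.span {x ^ k})) ↔ ∃ k, x ^ k * r ∈ I := by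
  have hmono : Monotone (fun k : ℕ => Submodule.colon I (Ideal.span {x ^ k})) := by
    intro k l hkl
    exact Submodule.colon_mono le_rfl
      ((Ideal.span_singleton_le_span_singleton).2 (pow_dvd_pow x hkl))
  rw [show (⨆ k : ℕ, Submodule.colon I (Ideal.span {x ^ k})) = ⨆ k : ℕ, (⟨_, hmono⟩ : ℕ →o Ideal R) k from rfl,
    Submodule.mem_iSup_of_chain]
  constructor
  · rintro ⟨k, hk⟩
    exact ⟨k, by simpa [mul_comm] using Submodule.mem_colon_span_singleton.1 hk⟩
  · rintro ⟨k, hk⟩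
    exact ⟨k, Submodule.mem_colon_span_singleton.2 (by simpa [mul_comm] using hk)⟩

lemma mem_satur {R : Type*} [CommRing R] {I : Ideal R} {x r : R} :
    r ∈ satur I x ↔ ∃ k, x ^ k * r ∈ I := mem_satur_aux

lemma satur_mono {R : Type*} [CommRing R] {I J : Ideal R} (h : I ≤ J) (x : R) :
    satur I x ≤ satur J x := by
  intro r hr
  obtain ⟨k, hk⟩ := mem_satur.1 hr
  exact mem_satur.2 ⟨k, h hk⟩

theorem stmt1 {R : Type*} [CommRing R] (I : Ideal R) (x : R) (n m α : ℕ)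
    (h1 : 1 ≤ m) (h2 : m < α) (h3 : α ≤ n + 1) :
    Ideal.span {x ^ m} ⊓
      ((∑ i ∈ Finset.range (m - 1), Ideal.span {x ^ i} * satur (I ^ (n - i)) x) +
        Ideal.span {x ^ (m - 1)} * satur (I ^ (n + 1 - α)) x)
      = Ideal.span {x ^ m} * satur (I ^ (n + 1 - α)) x := by
  set S := satur (I ^ (n + 1 - α)) x with hS
  apply le_antisymm
  · -- hard direction
    rintro r ⟨hr1, hr2⟩
    -- r ∈ S
    have hsum : ((∑ i ∈ Finset.range (m - 1), Ideal.span {x ^ i} * satur (I ^ (n - i)) x) +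
        Ideal.span {x ^ (m - 1)} * S) ≤ S := by
      apply sup_le
      · rw [Ideal.sum_eq_sup]
        apply Finset.sup_le
        intro i hi
        refine le_trans Ideal.mul_le_right (satur_mono (Ideal.pow_le_pow_right ?_) x)
        have := Finset.mem_range.1 hi
        omega
      · exact Ideal.mul_le_right
    have hrS : r ∈ S := hsum hr2
    obtain ⟨u, hu⟩ := Ideal.mem_span_singleton'.1 hr1
    obtain ⟨k, hk⟩ := mem_satur.1 hrS
    have huS : u ∈ S := by
      refine mem_satur.2 ⟨k + m, ?_⟩
      have : x ^ (k + m) * u = x ^ k * (u * x ^ m) := by ring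
      rw [this, hu]; exact hk
    rw [← hu, mul_comm u (x ^ m)]
    exact Ideal.mul_mem_mul (Ideal.mem_span_singleton_self _) huS
  · apply le_inf Ideal.mul_le_left
    refine le_trans ?_ le_sup_right
    exact Ideal.mul_mono_left
      (Ideal.span_singleton_le_span_singleton.2 (pow_dvd_pow x (by omega)))
end

section
/- Let R be a Noetherian local ring and x_1, …, x_s a regular sequence in the maximal ideal, with Q_{s-1} = (x_1,…,x_{s-1}). Then for every m ≥ 1, x_s is a nonzerodivisor on R/Q_{s-1}^m, i.e., Q_{s-1}^m : x_s = Q_{s-1}^m. -/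
open RingTheory.Sequence Ideal Submodule Pointwise

lemma supPow {R : Type*} [CommRing R] (A B : Ideal R) :
    ∀ m : ℕ, (A ⊔ B) ^ (m + 1) ≤ B ^ (m + 1) ⊔ A * (A ⊔ B) ^ m := by
  intro m
  induction m with
  | zero => simp [Ideal.mul_top]
  | succ m ih =>
    calc (A ⊔ B) ^ (m + 2) = (A ⊔ B) ^ (m+1) * (A ⊔ B) := by ring
    _ ≤ (B ^ (m + 1) ⊔ A * (A ⊔ B) ^ m) * (A ⊔ B) := Ideal.mul_mono_left ih
    _ = B ^ (m+1) * A ⊔ B ^ (m+2) ⊔ A * (A ⊔ B) ^ (m+1) := by rw [Ideal.sup_mul, Ideal.mul_sup]; ring_nf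
    _ ≤ B ^ (m + 2) ⊔ A * (A ⊔ B) ^ (m + 1) := by
        apply sup_le (sup_le ?_ le_sup_left) le_sup_right
        calc B ^ (m+1) * A = A * B ^ (m+1) := mul_comm _ _
        _ ≤ A * (A ⊔ B) ^ (m+1) := Ideal.mul_mono_right (Ideal.pow_right_mono le_sup_right _)
        _ ≤ _ := le_sup_right

lemma quotTransfer {R : Type*} [CommRing R] (x : R) (L : List R)
    (h : IsWeaklyRegular R (x :: L)) :
    IsWeaklyRegular (R ⧸ Ideal.span {x}) (L.map (Ideal.Quotient.mk (Ideal.span {x}))) := by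
  obtain ⟨-, h2⟩ := (isWeaklyRegular_cons_iff' R x L).mp h
  have heq : (x • ⊤ : Submodule R R) = (Ideal.span {x} : Ideal R) := by
    rw [← ideal_span_singleton_smul, smul_eq_mul, Ideal.mul_top]
  refine (AddEquiv.isWeaklyRegular_congr
    (e := (Submodule.quotEquivOfEq _ _ heq).toAddEquiv) ?_).mp h2
  rw [List.forall₂_same (l := L.map (Ideal.Quotient.mk (Ideal.span {x})))]
  rintro c - z
  obtain ⟨a, rfl⟩ := Ideal.Quotient.mk_surjective c
  obtain ⟨w, rfl⟩ := Submodule.Quotient.mk_surjective _ z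
  rfl

lemma baseCase {R : Type*} [CommRing R] (l : List R) (y : R)
    (hreg : IsWeaklyRegular R (l ++ [y])) {r : R} (hr : r * y ∈ Ideal.ofList l) :
    r ∈ Ideal.ofList l := by
  obtain ⟨-, h2⟩ := (isWeaklyRegular_append_iff R l [y]).mp hreg
  obtain ⟨hy, -⟩ := (isWeaklyRegular_cons_iff _ y []).mp h2
  have htop : (Ideal.ofList l • ⊤ : Submodule R R) = Ideal.ofList l := by
    rw [smul_eq_mul, Ideal.mul_top]
  have h0 : y • (Submodule.Quotient.mk r : R ⧸ (Ideal.ofList l • ⊤ : Submodule R R)) = y • 0 := by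
    rw [smul_zero, ← Submodule.Quotient.mk_smul, Submodule.Quotient.mk_eq_zero, htop,
      smul_eq_mul, mul_comm]
    exact hr
  have := hy h0
  rwa [Submodule.Quotient.mk_eq_zero, htop] at this

universe u

theorem key : ∀ (N : ℕ) (R : Type u) [CommRing R] [IsLocalRing R] [IsNoetherianRing R]
    (k : ℕ) (l : List R) (y : R), k + l.length ≤ N →
    (∀ a ∈ l ++ [y], a ∈ IsLocalRing.maximalIdeal R) →
    IsWeaklyRegular R (l ++ [y]) →
    ∀ r : R, r * y ∈ Ideal.ofList l ^ (k + 1) → r ∈ Ideal.ofList l ^ (k + 1) := by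
  intro N
  induction N with
  | zero =>
    intro R _ _ _ k l y hN hmem hreg r hr
    have hk : k = 0 := by omega
    subst hk
    rw [pow_one] at hr ⊢
    exact baseCase l y hreg hr
  | succ N IH =>
    intro R _ _ _ k l y hN hmem hreg r hr
    match k, l with
    | 0, l =>
      rw [pow_one] at hr ⊢
      exact baseCase l y hreg hr
    | (k+1), [] =>
      obtain ⟨hy, -⟩ := (isWeaklyRegular_cons_iff R y []).mp hreg
      have hbot : (Ideal.ofList ([] : List R)) ^ (k + 1 + 1) = ⊥ := by
        rw [Ideal.ofList_nil, ← Ideal.zero_eq_bot, zero_pow (by omega)]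
      rw [hbot, Ideal.mem_bot] at hr ⊢
      have : y • r = y • 0 := by rw [smul_zero, smul_eq_mul, mul_comm]; exact hr
      exact hy this
    | (k+1), (x :: l') =>
      -- notation
      set Q : Ideal R := Ideal.ofList (x :: l') with hQ
      set L' : Ideal R := Ideal.ofList l' with hL'
      have hQsup : Q = Ideal.span {x} ⊔ L' := Ideal.ofList_cons x l'
      have hxmem : x ∈ IsLocalRing.maximalIdeal R := hmem x (by simp)
      -- the quotient ring
      let mk := Ideal.Quotient.mk (Ideal.span {x})
      have hspan_ne : Ideal.span {x} ≠ ⊤ := by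
        rw [Ne, Ideal.span_singleton_eq_top]
        exact hxmem
      haveI : Nontrivial (R ⧸ Ideal.span {x}) := Ideal.Quotient.nontrivial_iff.mpr hspan_ne
      haveI : IsLocalRing (R ⧸ Ideal.span {x}) :=
        IsLocalRing.of_surjective' mk Ideal.Quotient.mk_surjective
      -- Step A : r ∈ L'^(k+2) ⊔ span {x}
      have hregq : IsWeaklyRegular (R ⧸ Ideal.span {x}) ((l'.map mk) ++ [mk y]) := by
        simpa [List.map_append] using quotTransfer x (l' ++ [y]) hreg
      have hmemq : ∀ a ∈ (l'.map mk) ++ [mk y], a ∈ IsLocalRing.maximalIdeal (R ⧸ Ideal.span {x}) := by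
        intro a ha
        have : ∃ b ∈ (l' ++ [y]), mk b = a := by
          simp only [List.mem_append, List.mem_map, List.mem_singleton] at ha ⊢
          rcases ha with ⟨b, hb, rfl⟩ | rfl
          · exact ⟨b, Or.inl hb, rfl⟩
          · exact ⟨y, Or.inr rfl, rfl⟩
        obtain ⟨b, hb, rfl⟩ := this
        have hbmem : b ∈ IsLocalRing.maximalIdeal R := hmem b (by
          rcases List.mem_append.mp hb with h | h
          · exact List.mem_append.mpr (Or.inl (List.mem_cons_of_mem x h))
          · exact List.mem_append.mpr (Or.inr h))
        intro hu
        obtain ⟨c, hc⟩ := isUnit_iff_exists_inv.mp hu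
        obtain ⟨d, rfl⟩ := Ideal.Quotient.mk_surjective c
        have : b * d - 1 ∈ Ideal.span {x} := by
          rw [← Ideal.Quotient.eq_zero_iff_mem, map_sub, _root_.map_mul, map_one, sub_eq_zero]
          exact hc
        have h1mem : (1 : R) ∈ IsLocalRing.maximalIdeal R := by
          have hbd : b * d ∈ IsLocalRing.maximalIdeal R :=
            Ideal.mul_mem_right d _ hbmem
          have hsub : b * d - 1 ∈ IsLocalRing.maximalIdeal R :=
            (Ideal.span_le.mpr (by simpa using hxmem)) this
          simpa using Ideal.sub_mem _ hbd hsub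
        exact (IsLocalRing.maximalIdeal.isMaximal R).ne_top (Ideal.eq_top_of_isUnit_mem _ h1mem isUnit_one)
      have hrq : mk r * mk y ∈ Ideal.ofList (l'.map mk) ^ (k + 2) := by
        rw [← Ideal.map_ofList, ← hL', ← Ideal.map_pow, ← _root_.map_mul]
        have hQle : Ideal.map mk (Q ^ (k+2)) ≤ Ideal.map mk (L' ^ (k+2)) := by
          rw [Ideal.map_pow, Ideal.map_pow]
          apply Ideal.pow_right_mono
          rw [hQsup, Ideal.map_sup]
          apply sup_le _ le_rfl
          have hx0 : mk x = 0 := Ideal.Quotient.eq_zero_iff_mem.mpr (Ideal.mem_span_singleton_self x)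
          rw [Ideal.map_span, Set.image_singleton, hx0, Ideal.span_singleton_eq_bot.mpr rfl]
          exact bot_le
        exact hQle (Ideal.mem_map_of_mem mk hr)
      have hN' : k + 1 + l'.length ≤ N := by simp at hN; omega
      have hmkr : mk r ∈ Ideal.map mk (L' ^ (k + 2)) := by
        have := IH (R ⧸ Ideal.span {x}) (k+1) (l'.map mk) (mk y)
          (by simp only [List.length_map]; omega) hmemq hregq (mk r) hrq
        rwa [← Ideal.map_ofList, ← hL', ← Ideal.map_pow] at this
      -- r = q + t * x
      have hrsup : r ∈ L' ^ (k + 2) ⊔ Ideal.span {x} := by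
        have h1 : r ∈ Ideal.comap mk (Ideal.map mk (L' ^ (k + 2))) := hmkr
        rwa [Ideal.comap_map_of_surjective mk Ideal.Quotient.mk_surjective,
          ← RingHom.ker_eq_comap_bot, Ideal.mk_ker] at h1
      obtain ⟨q, hq, u, hu, hqu⟩ := Submodule.mem_sup.mp hrsup
      obtain ⟨t, rfl⟩ := Ideal.mem_span_singleton'.mp hu
      -- Step B : t * y ∈ Q ^ (k + 1)
      have hQle2 : L' ≤ Q := by rw [hQsup]; exact le_sup_right
      have hLQ : L' ^ (k+2) ≤ Q ^ (k+2) := Ideal.pow_right_mono hQle2 _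
      have htyx : (t * y) * x ∈ Q ^ (k + 2) := by
        have hqy : q * y ∈ Q ^ (k + 2) := Ideal.mul_mem_right y _ (hLQ hq)
        have : (t * y) * x = r * y - q * y := by rw [← hqu]; ring
        rw [this]
        exact Ideal.sub_mem _ hr hqy
      have hdecomp : Q ^ (k + 2) ≤ L' ^ (k + 2) ⊔ Ideal.span {x} * Q ^ (k + 1) := by
        rw [hQsup]
        exact supPow (Ideal.span {x}) L' (k + 1)
      obtain ⟨g, hg, w, hw, hgw⟩ := Submodule.mem_sup.mp (hdecomp htyx)
      obtain ⟨h, hh, rfl⟩ := Ideal.mem_span_singleton_mul.mp hw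
      -- permuted sequence l' ++ [x] is weakly regular
      have hxl' : IsWeaklyRegular R (x :: l') :=
        ((isWeaklyRegular_append_iff R (x :: l') [y]).mp hreg).1
      have hpermmem : ∀ a ∈ x :: l', a ∈ IsLocalRing.maximalIdeal R := by
        intro a ha
        exact hmem a (List.mem_append.mpr (Or.inl ha))
      have hperm : IsWeaklyRegular R (l' ++ [x]) :=
        IsLocalRing.isWeaklyRegular_of_perm_of_subset_maximalIdeal hxl'
          (List.perm_append_comm (l₁ := [x]) (l₂ := l')) hpermmem
      have hpermmem' : ∀ a ∈ l' ++ [x], a ∈ IsLocalRing.maximalIdeal R := by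
        intro a ha
        apply hpermmem
        rcases List.mem_append.mp ha with h | h
        · exact List.mem_cons_of_mem x h
        · simp at h; simp [h]
      have hty_h : t * y - h ∈ L' ^ (k + 2) := by
        apply IH R (k + 1) l' x (by omega) hpermmem' hperm
        have : (t * y - h) * x = g := by
          have : (t * y) * x = g + x * h := hgw.symm
          linear_combination this
        rw [← hL', this]
        exact hg
      have hty : t * y ∈ Q ^ (k + 1) := by
        have h1 : t * y = (t * y - h) + h := by ring
        rw [h1]
        exact Ideal.add_mem _ (Ideal.pow_le_pow_right (by omega) (hLQ (hty_h))) hh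
      -- Step C : t ∈ Q ^ (k + 1)
      have hmem' : ∀ a ∈ (x :: l') ++ [y], a ∈ IsLocalRing.maximalIdeal R := hmem
      have ht : t ∈ Q ^ (k + 1) := IH R k (x :: l') y (by simp; omega) hmem' hreg t hty
      -- conclude
      have hxQ : x ∈ Q := Ideal.subset_span (by simp)
      have hxt : t * x ∈ Q ^ (k + 2) := by
        have := Ideal.mul_mem_mul ht hxQ
        rwa [← pow_succ] at this
      rw [← hqu]
      exact Ideal.add_mem _ (hLQ hq) hxt

theorem stmt4 {R : Type*} [CommRing R] [IsLocalRing R] [IsNoetherianRing R] {s : ℕ}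
    (x : Fin (s + 1) → R) (hmem : ∀ i, x i ∈ IsLocalRing.maximalIdeal R)
    (hreg : RingTheory.Sequence.IsRegular R (List.ofFn x)) (m : ℕ) (hm : 1 ≤ m) :
    Submodule.colon ((Ideal.span (Set.range fun i : Fin s => x i.castSucc)) ^ m)
        (Ideal.span {x (Fin.last s)})
      = (Ideal.span (Set.range fun i : Fin s => x i.castSucc)) ^ m := by
  obtain ⟨k, rfl⟩ : ∃ k, m = k + 1 := ⟨m - 1, by omega⟩
  set l : List R := List.ofFn (fun i : Fin s => x i.castSucc) with hl
  set y : R := x (Fin.last s) with hy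
  have hofn : List.ofFn x = l ++ [y] := by
    rw [List.ofFn_succ' x, List.concat_eq_append]
  have hspan : Ideal.span (Set.range fun i : Fin s => x i.castSucc) = Ideal.ofList l := by
    apply congrArg Ideal.span
    ext a
    simp [hl, List.mem_ofFn, eq_comm]
  rw [hspan]
  apply le_antisymm
  · intro r hrmem
    have hr : r * y ∈ Ideal.ofList l ^ (k + 1) := Ideal.mem_colon_span_singleton.mp hrmem
    refine key (k + l.length) R k l y le_rfl ?_ ?_ r hr
    · intro a ha
      rw [← hofn] at ha
      obtain ⟨i, rfl⟩ := List.mem_ofFn.mp ha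
      exact hmem i
    · rw [← hofn]
      exact hreg.toIsWeaklyRegular
  · intro r hrmem
    exact Ideal.mem_colon_span_singleton.mpr (Ideal.mul_mem_right y _ hrmem)
end

section
/- Let R be a Noetherian local ring and x_1,…,x_s a regular sequence in the maximal ideal. Then for all n ≥ 1, ⋂_{α=1}^{n} ( (x_s^α) + Q_{s-1}^{n+1-α} ) = Q_s^n, where Q_{s-1} = (x_1,…,x_{s-1}) and Q_s = (x_1,…,x_s). -/
namespace Stmt5Aux

open MvPolynomial

variable {R : Type*} [CommRing R]

lemma sup_pow_le_sharp (I J : Ideal R) : ∀ (n a b : ℕ), a + b = n + 1 → (I ⊔ J) ^ n ≤ I ^ a ⊔ J ^ b := by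
  intro n
  induction n with
  | zero =>
    intro a b hab
    match a, b with
    | 0, b => simp
    | a+1, b => have hb : b = 0 := by omega
                subst hb; simp
  | succ n ih =>
    intro a b hab
    match a, b with
    | 0, b => simp
    | a+1, 0 => simp
    | a+1, b+1 =>
      have h1 : (I ⊔ J) ^ n ≤ I ^ (a+1) ⊔ J ^ b := ih _ _ (by omega)
      have h2 : (I ⊔ J) ^ n ≤ I ^ a ⊔ J ^ (b+1) := ih _ _ (by omega)
      rw [pow_succ]
      refine Ideal.mul_le.mpr fun r hr s hs => ?_
      obtain ⟨u, hu, v, hv, rfl⟩ := Submodule.mem_sup.mp hs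
      rw [mul_add]
      refine Submodule.add_mem _ ?_ ?_
      · obtain ⟨p, hp, q, hq, rfl⟩ := Submodule.mem_sup.mp (h2 hr)
        rw [add_mul]
        refine Submodule.add_mem _ (Submodule.mem_sup_left ?_) (Submodule.mem_sup_right ?_)
        · exact (pow_succ I a) ▸ Ideal.mul_mem_mul hp hu
        · exact Ideal.mul_mem_right _ _ hq
      · obtain ⟨p, hp, q, hq, rfl⟩ := Submodule.mem_sup.mp (h1 hr)
        rw [add_mul]
        refine Submodule.add_mem _ (Submodule.mem_sup_left ?_) (Submodule.mem_sup_right ?_)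
        · exact Ideal.mul_mem_right _ _ hp
        · exact (pow_succ J b) ▸ Ideal.mul_mem_mul hq hv

variable {N : ℕ} (x : Fin N → R)

/-- Ideal generated by the first `t` elements. -/
def Jd (t : ℕ) : Ideal R := Ideal.span (x '' {i | (i : ℕ) < t})

lemma Jd_mono {t t'} (h : t ≤ t') : Jd x t ≤ Jd x t' :=
  Ideal.span_mono (Set.image_mono fun i hi => lt_of_lt_of_le hi h)

lemma mem_Jd {i : Fin N} {t} (h : (i : ℕ) < t) : x i ∈ Jd x t :=
  Ideal.subset_span ⟨i, h, rfl⟩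

/-- Polynomial only uses variables of index `< t`. -/
def UsesLT (t : ℕ) (F : MvPolynomial (Fin N) R) : Prop :=
  ∀ d ∈ F.support, ∀ i : Fin N, d i ≠ 0 → (i : ℕ) < t

lemma homog_deg {F : MvPolynomial (Fin N) R} {n : ℕ} (hF : F.IsHomogeneous n)
    {d : Fin N →₀ ℕ} (hd : coeff d F ≠ 0) : d.degree = n := by
  by_contra h
  exact hd (hF.coeff_eq_zero h)

lemma prod_pow_mem_pow {ι : Type*} (s : Finset ι) (a : ι → R) (d : ι → ℕ) (I : Ideal R)
    (h : ∀ i ∈ s, a i ∈ I) : (∏ i ∈ s, a i ^ d i) ∈ I ^ (∑ i ∈ s, d i) := by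
  classical
  induction s using Finset.induction_on with
  | empty => simp
  | @insert j s hj ih =>
    rw [Finset.prod_insert hj, Finset.sum_insert hj, pow_add]
    exact Ideal.mul_mem_mul (Ideal.pow_mem_pow (h _ (Finset.mem_insert_self _ _)) _)
      (ih fun i hi => h i (Finset.mem_insert_of_mem hi))

lemma aeval_monomial_mem {t : ℕ} (d : Fin N →₀ ℕ) (c : R)
    (hd : ∀ i : Fin N, d i ≠ 0 → (i : ℕ) < t) :
    aeval x (monomial d c) ∈ Jd x t ^ d.degree := by
  rw [aeval_monomial]
  refine Ideal.mul_mem_left _ _ ?_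
  rw [Finsupp.prod, Finsupp.degree]
  exact prod_pow_mem_pow _ _ _ _ fun i hi => mem_Jd x (hd i (Finsupp.mem_support_iff.mp hi))

lemma aeval_mem_of_usesLT {t n : ℕ} {F : MvPolynomial (Fin N) R} (hU : UsesLT t F)
    (hF : F.IsHomogeneous n) : aeval x F ∈ Jd x t ^ n := by
  rw [F.as_sum, map_sum]
  refine Submodule.sum_mem _ fun d hd => ?_
  have hdeg : d.degree = n := homog_deg hF (mem_support_iff.mp hd)
  exact hdeg ▸ aeval_monomial_mem x d _ (hU d hd)

lemma usesLT_iff {t : ℕ} {F : MvPolynomial (Fin N) R} :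
    UsesLT t F ↔ ∀ d : Fin N →₀ ℕ, coeff d F ≠ 0 → ∀ i : Fin N, d i ≠ 0 → (i : ℕ) < t := by
  unfold UsesLT
  simp [mem_support_iff]

lemma UsesLT.add {t : ℕ} {F G : MvPolynomial (Fin N) R} (hF : UsesLT t F) (hG : UsesLT t G) :
    UsesLT t (F + G) := by
  rw [usesLT_iff] at *
  intro d hd i hi
  by_cases h : coeff d F ≠ 0
  · exact hF d h i hi
  · push_neg at h
    refine hG d ?_ i hi
    intro h'
    exact hd (by rw [coeff_add, h, h', add_zero])

lemma UsesLT.sub {t : ℕ} {F G : MvPolynomial (Fin N) R} (hF : UsesLT t F) (hG : UsesLT t G) :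
    UsesLT t (F - G) := by
  rw [usesLT_iff] at *
  intro d hd i hi
  by_cases h : coeff d F ≠ 0
  · exact hF d h i hi
  · push_neg at h
    refine hG d ?_ i hi
    intro h'
    exact hd (by rw [coeff_sub, h, h', sub_zero])

lemma UsesLT.C_mul {t : ℕ} {F : MvPolynomial (Fin N) R} (hF : UsesLT t F) (c : R) :
    UsesLT t (C c * F) := by
  rw [usesLT_iff] at *
  intro d hd i hi
  refine hF d (fun h => hd ?_) i hi
  rw [coeff_C_mul, h, mul_zero]

lemma usesLT_zero (t : ℕ) : UsesLT t (0 : MvPolynomial (Fin N) R) := by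
  rw [usesLT_iff]; simp

lemma usesLT_mul {t : ℕ} {F G : MvPolynomial (Fin N) R} (hF : UsesLT t F) (hG : UsesLT t G) :
    UsesLT t (F * G) := by
  intro d hd i hi
  obtain ⟨u, hu, v, hv, rfl⟩ := Finset.mem_add.mp (MvPolynomial.support_mul F G hd)
  have hi' : u i + v i ≠ 0 := by rwa [Finsupp.add_apply] at hi
  rcases (by omega : u i ≠ 0 ∨ v i ≠ 0) with h | h
  · exact hF u hu i h
  · exact hG v hv i h

/-- The ideal of values of homogeneous degree-`n` polynomials in the first `t`
variables with coefficients in `I`. -/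
def HV (I : Ideal R) (t n : ℕ) : Ideal R where
  carrier := {r | ∃ F : MvPolynomial (Fin N) R, UsesLT t F ∧ F.IsHomogeneous n ∧
    (∀ d, coeff d F ∈ I) ∧ aeval x F = r}
  zero_mem' := ⟨0, usesLT_zero t, isHomogeneous_zero _ _ _, by simp, map_zero _⟩
  add_mem' := by
    rintro a b ⟨F, hFU, hFH, hFc, rfl⟩ ⟨G, hGU, hGH, hGc, rfl⟩
    exact ⟨F + G, hFU.add hGU, hFH.add hGH,
      fun d => by rw [coeff_add]; exact add_mem (hFc d) (hGc d), map_add _ _ _⟩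
  smul_mem' := by
    rintro c a ⟨F, hFU, hFH, hFc, rfl⟩
    refine ⟨C c * F, hFU.C_mul c, hFH.C_mul c,
      fun d => by rw [coeff_C_mul]; exact Ideal.mul_mem_left _ _ (hFc d), ?_⟩
    rw [map_mul, aeval_C]
    simp [smul_eq_mul]

lemma mem_HV {I : Ideal R} {t n : ℕ} {r : R} :
    r ∈ HV x I t n ↔ ∃ F : MvPolynomial (Fin N) R, UsesLT t F ∧ F.IsHomogeneous n ∧
      (∀ d, coeff d F ∈ I) ∧ aeval x F = r := Iff.rfl

lemma le_HV_one (t : ℕ) : Jd x t ≤ HV x ⊤ t 1 := by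
  rw [Jd, Ideal.span_le]
  rintro r ⟨i, hi, rfl⟩
  refine ⟨X i, ?_, isHomogeneous_X _ _, fun d => trivial, aeval_X _ _⟩
  intro d hd j hj
  rw [mem_support_iff, coeff_X'] at hd
  have hd' : Finsupp.single i 1 = d := by
    by_contra h
    simp [h] at hd
  subst hd'
  rw [Finsupp.single_apply] at hj
  by_cases h : i = j
  · exact h ▸ hi
  · simp [h] at hj

lemma pow_le_HV (t n : ℕ) : Jd x t ^ n ≤ HV x ⊤ t n := by
  induction n with
  | zero =>
    intro r _
    refine ⟨C r, ?_, isHomogeneous_C _ _, fun d => trivial, aeval_C _ _⟩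
    intro d hd j hj
    rw [mem_support_iff, coeff_C] at hd
    by_cases h : (0 : Fin N →₀ ℕ) = d
    · subst h; simp at hj
    · simp [h] at hd
  | succ n ih =>
    rw [pow_succ]
    refine Ideal.mul_le.mpr fun r hr s hs => ?_
    obtain ⟨F, hFU, hFH, -, rfl⟩ := ih hr
    obtain ⟨G, hGU, hGH, -, rfl⟩ := le_HV_one x t hs
    exact ⟨F * G, usesLT_mul hFU hGU, hFH.mul hGH, fun d => trivial, map_mul _ _ _⟩

lemma pow_succ_le_HV (t n : ℕ) : Jd x t ^ (n + 1) ≤ HV x (Jd x t) t n := by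
  rw [pow_succ']
  refine Ideal.mul_le.mpr fun s hs r hr => ?_
  obtain ⟨F, hFU, hFH, -, rfl⟩ := pow_le_HV x t n hr
  refine ⟨C s * F, hFU.C_mul s, hFH.C_mul s,
    fun d => by rw [coeff_C_mul]; exact Ideal.mul_mem_right _ _ hs, ?_⟩
  rw [map_mul, aeval_C]
  simp

/-- Upgrade "coeffs in J from aeval = 0" to "coeffs in J from aeval ∈ J^(n+1)". -/
lemma QRfull_of {t n : ℕ}
    (hqr : ∀ F : MvPolynomial (Fin N) R, UsesLT t F → F.IsHomogeneous n →
      aeval x F = 0 → ∀ d, coeff d F ∈ Jd x t) :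
    ∀ F : MvPolynomial (Fin N) R, UsesLT t F → F.IsHomogeneous n →
      aeval x F ∈ Jd x t ^ (n + 1) → ∀ d, coeff d F ∈ Jd x t := by
  intro F hU hF hval d
  obtain ⟨P, hPU, hPH, hPc, hPval⟩ := pow_succ_le_HV x t n hval
  have h0 : aeval x (F - P) = 0 := by rw [map_sub, hPval, sub_self]
  have hd := hqr (F - P) (hU.sub hPU) (hF.sub hPH) h0 d
  rw [coeff_sub] at hd
  have : coeff d F = (coeff d F - coeff d P) + coeff d P := by ring
  rw [this]
  exact add_mem hd (hPc d)

lemma KEY_of {t : ℕ} (ht : t < N)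
    (hqr : ∀ n (F : MvPolynomial (Fin N) R), UsesLT t F → F.IsHomogeneous n →
      aeval x F = 0 → ∀ d, coeff d F ∈ Jd x t)
    (hreg : ∀ c : R, x ⟨t, ht⟩ * c ∈ Jd x t → c ∈ Jd x t) :
    ∀ (m : ℕ) (r : R), x ⟨t, ht⟩ * r ∈ Jd x t ^ m → r ∈ Jd x t ^ m := by
  intro m
  induction m with
  | zero => simp
  | succ m ih =>
    intro r hr
    have hr' : r ∈ Jd x t ^ m := ih r (Ideal.pow_le_pow_right (by omega) hr)
    obtain ⟨F, hU, hF, -, hval⟩ := pow_le_HV x t m hr'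
    have hval2 : aeval x (C (x ⟨t, ht⟩) * F) ∈ Jd x t ^ (m + 1) := by
      rw [map_mul, aeval_C, hval]
      simpa using hr
    have hcoef : ∀ d, coeff d F ∈ Jd x t := by
      intro d
      have h := QRfull_of x (hqr m) (C (x ⟨t, ht⟩) * F) (hU.C_mul _) (hF.C_mul _) hval2 d
      rw [coeff_C_mul] at h
      exact hreg _ h
    rw [← hval, F.as_sum, map_sum]
    refine Submodule.sum_mem _ fun u hu => ?_
    rw [aeval_monomial]
    have hdeg : u.degree = m := homog_deg hF (mem_support_iff.mp hu)
    have hm : (algebraMap R R) (coeff u F) * u.prod (fun i k => x i ^ k) ∈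
        Jd x t * Jd x t ^ m := by
      refine Ideal.mul_mem_mul (by simpa using hcoef u) ?_
      rw [Finsupp.prod, ← hdeg, Finsupp.degree]
      exact prod_pow_mem_pow _ _ _ _ fun i hi =>
        mem_Jd x (hU u hu i (Finsupp.mem_support_iff.mp hi))
    rwa [← pow_succ'] at hm

lemma pow_mono {I J : Ideal R} (h : I ≤ J) (n : ℕ) : I ^ n ≤ J ^ n := by
  induction n with
  | zero => simp
  | succ n ih => rw [pow_succ, pow_succ]; exact Ideal.mul_mono ih h

lemma degree_add' (a b : Fin N →₀ ℕ) : (a + b).degree = a.degree + b.degree := by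
  have h : ∀ f : Fin N →₀ ℕ, f.degree = f.sum fun _ k => k := fun f => rfl
  rw [h, h, h, Finsupp.sum_add_index' (fun _ => rfl) (fun _ _ _ => rfl)]

lemma degree_single' (τ : Fin N) : (Finsupp.single τ 1).degree = 1 := by
  have h : ∀ f : Fin N →₀ ℕ, f.degree = f.sum fun _ k => k := fun f => rfl
  rw [h, Finsupp.sum_single_index rfl]

lemma coeff_sum_monomial {s : Finset (Fin N →₀ ℕ)} {f : (Fin N →₀ ℕ) → R} {d : Fin N →₀ ℕ} :
    coeff d (∑ u ∈ s, monomial u (f u)) = if d ∈ s then f d else 0 := by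
  rw [coeff_sum]
  simp only [coeff_monomial]
  exact Finset.sum_ite_eq' s d f

lemma usesLT_sum {t : ℕ} {ι : Type*} (s : Finset ι) (f : ι → MvPolynomial (Fin N) R)
    (h : ∀ i ∈ s, UsesLT t (f i)) : UsesLT t (∑ i ∈ s, f i) := by
  classical
  induction s using Finset.induction_on with
  | empty => simpa using usesLT_zero t
  | @insert j s hj ih =>
    rw [Finset.sum_insert hj]
    exact (h j (Finset.mem_insert_self _ _)).add (ih fun i hi => h i (Finset.mem_insert_of_mem hi))

lemma usesLT_monomial {t : ℕ} {u : Fin N →₀ ℕ} {c : R} (h : ∀ i : Fin N, u i ≠ 0 → (i : ℕ) < t) :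
    UsesLT t (monomial u c) := by
  rw [usesLT_iff]
  intro d hd i hi
  rw [coeff_monomial] at hd
  by_cases h' : u = d
  · exact h i (h' ▸ hi)
  · simp [h'] at hd

lemma eq_zero_of_aeval0 {F : MvPolynomial (Fin N) R} (h : ∀ u ∈ F.support, u = 0)
    (h0 : aeval x F = 0) : F = 0 := by
  have hC : F = C (coeff 0 F) := by
    ext d
    rw [coeff_C]
    by_cases hd : (0 : Fin N →₀ ℕ) = d
    · rw [if_pos hd, ← hd]
    · rw [if_neg hd]
      by_contra hne
      exact hd (h d (mem_support_iff.mpr hne)).symm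
  rw [hC, aeval_C] at h0
  have : coeff 0 F = 0 := by simpa using h0
  rw [hC, this, map_zero]

theorem QR0 (hx : ∀ (i : Fin N) (c : R), x i * c ∈ Jd x (i : ℕ) → c ∈ Jd x (i : ℕ)) :
    ∀ (t n : ℕ) (F : MvPolynomial (Fin N) R), UsesLT t F → F.IsHomogeneous n →
      aeval x F = 0 → ∀ d, coeff d F ∈ Jd x t := by
  intro t
  induction t with
  | zero =>
    intro n F hU hF h0 d
    have hF0 : F = 0 := eq_zero_of_aeval0 x
      (fun u hu => Finsupp.ext fun i => by
        by_contra h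
        exact absurd (hU u hu i h) (Nat.not_lt_zero _)) h0
    simp [hF0]
  | succ t IH =>
    by_cases ht : t < N
    swap
    · intro n F hU hF h0 d
      refine Jd_mono x (Nat.le_succ t) (IH n F ?_ hF h0 d)
      intro u hu i hi
      have := i.isLt
      omega
    · have KEY := KEY_of x ht (IH) (hx ⟨t, ht⟩)
      intro n
      induction n using Nat.strong_induction_on with
      | _ n IHn =>
      intro F hU hF h0 d
      match n, hF, IHn with
      | 0, hF, _ =>
        have hF0 : F = 0 := eq_zero_of_aeval0 x
          (fun u hu => (Finsupp.degree_eq_zero_iff _).mp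
            (homog_deg hF (mem_support_iff.mp hu))) h0
        simp [hF0]
      | m + 1, hF, IHn =>
      set τ : Fin N := ⟨t, ht⟩ with hτdef
      set e : Fin N →₀ ℕ := Finsupp.single τ 1 with hedef
      set G : MvPolynomial (Fin N) R :=
        ∑ u ∈ F.support.filter (fun u => u τ = 0), monomial u (coeff u F) with hGdef
      set H : MvPolynomial (Fin N) R :=
        ∑ u ∈ F.support.filter (fun u => ¬ u τ = 0), monomial (u - e) (coeff u F) with hHdef
      have hle : ∀ u : Fin N →₀ ℕ, ¬ u τ = 0 → e ≤ u := fun u hu =>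
        Finsupp.single_le_iff.mpr (Nat.one_le_iff_ne_zero.mpr hu)
      -- F = G + X τ * H
      have hXmul : X τ * H = ∑ u ∈ F.support.filter (fun u => ¬ u τ = 0),
          monomial u (coeff u F) := by
        rw [hHdef, Finset.mul_sum]
        refine Finset.sum_congr rfl fun u hu => ?_
        have huτ : ¬ u τ = 0 := (Finset.mem_filter.mp hu).2
        rw [X, monomial_mul, one_mul, ← hedef, add_tsub_cancel_of_le (hle u huτ)]
      have hsplit : F = G + X τ * H := by
        rw [hXmul, hGdef]
        conv_lhs => rw [F.as_sum]
        rw [Finset.sum_filter_add_sum_filter_not F.support (fun u => u τ = 0)]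
      -- coefficients of G and H
      have hcoeffG : ∀ v : Fin N →₀ ℕ, v τ = 0 → coeff v G = coeff v F := by
        intro v hv
        rw [hGdef, coeff_sum_monomial]
        by_cases h2 : v ∈ F.support
        · rw [if_pos (Finset.mem_filter.mpr ⟨h2, hv⟩)]
        · rw [if_neg (fun hc => h2 (Finset.mem_filter.mp hc).1),
            notMem_support_iff.mp h2]
      have hcoeffH : ∀ v : Fin N →₀ ℕ, ¬ v τ = 0 → coeff (v - e) H = coeff v F := by
        intro v hv
        rw [hHdef, coeff_sum]
        simp only [coeff_monomial]
        rw [Finset.sum_congr rfl (fun u hu => if_congr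
          ⟨fun h => by
            have huτ : ¬ u τ = 0 := (Finset.mem_filter.mp hu).2
            calc u = u - e + e := (tsub_add_cancel_of_le (hle u huτ)).symm
              _ = v - e + e := by rw [h]
              _ = v := tsub_add_cancel_of_le (hle v hv),
           fun h => by rw [h]⟩ rfl rfl)]
        rw [Finset.sum_ite_eq' _ v (fun u => coeff u F)]
        by_cases h2 : v ∈ F.support
        · rw [if_pos (Finset.mem_filter.mpr ⟨h2, hv⟩)]
        · rw [if_neg (fun hc => h2 (Finset.mem_filter.mp hc).1),
            notMem_support_iff.mp h2]
      -- homogeneity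
      have hGH : G.IsHomogeneous (m + 1) := by
        rw [hGdef]
        exact IsHomogeneous.sum _ _ _ fun u hu => isHomogeneous_monomial _
          (homog_deg hF (mem_support_iff.mp (Finset.mem_filter.mp hu).1))
      have hHH : H.IsHomogeneous m := by
        rw [hHdef]
        refine IsHomogeneous.sum _ _ _ fun u hu => isHomogeneous_monomial _ ?_
        have h1 : u.degree = m + 1 :=
          homog_deg hF (mem_support_iff.mp (Finset.mem_filter.mp hu).1)
        have h2 : u - e + e = u := tsub_add_cancel_of_le (hle u (Finset.mem_filter.mp hu).2)
        have h3 := congrArg Finsupp.degree h2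
        rw [degree_add', degree_single', h1] at h3
        omega
      -- variable usage
      have hGU : UsesLT t G := by
        rw [hGdef]
        refine usesLT_sum _ _ fun u hu => usesLT_monomial fun i hi => ?_
        have h1 := hU u (Finset.mem_filter.mp hu).1 i hi
        have h2 : ¬ (i : ℕ) = t := by
          intro h
          exact absurd ((Fin.ext h : i = τ) ▸ hi) (by
            simpa using (Finset.mem_filter.mp hu).2)
        omega
      have hHU : UsesLT (t + 1) H := by
        rw [hHdef]
        refine usesLT_sum _ _ fun u hu => usesLT_monomial fun i hi => ?_
        refine hU u (Finset.mem_filter.mp hu).1 i fun h => hi ?_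
        rw [Finsupp.tsub_apply, h]
        simp
      -- values
      have hGval : aeval x G ∈ Jd x t ^ (m + 1) := aeval_mem_of_usesLT x hGU hGH
      have haevalF : aeval x G + x τ * aeval x H = 0 := by
        rw [← aeval_X (R := R) x τ, ← map_mul, ← map_add, ← hsplit, h0]
      have hxH : x τ * aeval x H ∈ Jd x t ^ (m + 1) := by
        have : x τ * aeval x H = - aeval x G := by linear_combination haevalF
        rw [this]
        exact neg_mem hGval
      have hHval : aeval x H ∈ Jd x t ^ (m + 1) := KEY (m + 1) _ hxH
      -- coefficients of H are in Jd (t+1), by inner induction (degree m < m+1)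
      have hHc : ∀ v, coeff v H ∈ Jd x (t + 1) :=
        QRfull_of x (fun F' => IHn m (Nat.lt_succ_self m) F') H hHU hHH
          (pow_mono (Jd_mono x (Nat.le_succ t)) (m + 1) hHval)
      -- replace x τ * aeval H by a polynomial value in the first t variables
      obtain ⟨P, hPU, hPH, -, hPval⟩ := pow_le_HV x t (m + 1) hHval
      have hWU : UsesLT t (G + C (x τ) * P) := hGU.add (hPU.C_mul _)
      have hWH : (G + C (x τ) * P).IsHomogeneous (m + 1) := hGH.add (hPH.C_mul _)
      have hWval : aeval x (G + C (x τ) * P) = 0 := by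
        rw [map_add, map_mul, aeval_C, hPval]
        simpa using haevalF
      have hWc := IH (m + 1) (G + C (x τ) * P) hWU hWH hWval
      -- conclude
      by_cases hdτ : d τ = 0
      · have h1 : coeff d F = coeff d (G + C (x τ) * P) - x τ * coeff d P := by
          rw [coeff_add, coeff_C_mul, ← hcoeffG d hdτ]
          ring
        rw [h1]
        refine sub_mem (Jd_mono x (Nat.le_succ t) (hWc d)) ?_
        exact Ideal.mul_mem_right _ _ (mem_Jd x (by simp [hτdef]))
      · rw [← hcoeffH d hdτ]
        exact hHc (d - e)

theorem KEY_pow (hx : ∀ (i : Fin N) (c : R), x i * c ∈ Jd x (i : ℕ) → c ∈ Jd x (i : ℕ))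
    {t : ℕ} (ht : t < N) :
    ∀ (j m : ℕ) (r : R), x ⟨t, ht⟩ ^ j * r ∈ Jd x t ^ m → r ∈ Jd x t ^ m := by
  have KEY : ∀ (m : ℕ) (r : R), x ⟨t, ht⟩ * r ∈ Jd x t ^ m → r ∈ Jd x t ^ m :=
    KEY_of x ht (QR0 x hx t) (hx ⟨t, ht⟩)
  intro j
  induction j with
  | zero => intro m r h; simpa using h
  | succ j ih =>
    intro m r h
    have h' : x ⟨t, ht⟩ * (x ⟨t, ht⟩ ^ j * r) ∈ Jd x t ^ m := by
      have : x ⟨t, ht⟩ * (x ⟨t, ht⟩ ^ j * r) = x ⟨t, ht⟩ ^ (j + 1) * r := by ring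
      rw [this]; exact h
    exact ih m r (KEY m _ h')

/-- The partial sums `∑_{k<j} (z)^k Q^(n-k)`. -/
def Tj (z : R) (Q : Ideal R) (n : ℕ) : ℕ → Ideal R
  | 0 => ⊥
  | j + 1 => Tj z Q n j ⊔ Ideal.span {z} ^ j * Q ^ (n - j)

lemma Tj_le_pow (z : R) (Q : Ideal R) (n : ℕ) : ∀ j, Tj z Q n j ≤ Q ^ (n - j) := by
  intro j
  induction j with
  | zero => exact bot_le
  | succ j ih =>
    refine sup_le (le_trans ih (Ideal.pow_le_pow_right (by omega))) ?_
    exact le_trans Ideal.mul_le_right (Ideal.pow_le_pow_right (show n - (j + 1) ≤ n - j by omega))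

lemma Tj_le_sup_pow (z : R) (Q : Ideal R) (n : ℕ) :
    ∀ j, j ≤ n → Tj z Q n j ≤ (Ideal.span {z} ⊔ Q) ^ n := by
  intro j
  induction j with
  | zero => exact fun _ => bot_le
  | succ j ih =>
    intro hj
    refine sup_le (ih (by omega)) ?_
    calc Ideal.span {z} ^ j * Q ^ (n - j)
        ≤ (Ideal.span {z} ⊔ Q) ^ j * (Ideal.span {z} ⊔ Q) ^ (n - j) :=
          Ideal.mul_mono (pow_mono le_sup_left j) (pow_mono le_sup_right (n - j))
      _ = (Ideal.span {z} ⊔ Q) ^ n := by rw [← pow_add]; congr 1; omega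

lemma chain (z : R) (Q : Ideal R) (n : ℕ)
    (hKEY : ∀ (j m : ℕ) (r : R), z ^ j * r ∈ Q ^ m → r ∈ Q ^ m)
    (y : R) (hy : ∀ α, 1 ≤ α → α ≤ n → y ∈ Ideal.span {z ^ α} ⊔ Q ^ (n + 1 - α)) :
    ∀ j, j ≤ n → y ∈ Ideal.span {z} ^ j ⊔ Tj z Q n j := by
  intro j
  induction j with
  | zero =>
    intro _
    refine Submodule.mem_sup_left ?_
    rw [pow_zero, Ideal.one_eq_top]
    trivial
  | succ j ih =>
    intro hj1
    obtain ⟨p, hp, w, hw, hy'⟩ := Submodule.mem_sup.mp (ih (by omega))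
    rw [Ideal.span_singleton_pow] at hp
    obtain ⟨a, ha⟩ := Ideal.mem_span_singleton'.mp hp
    have hwQ : w ∈ Q ^ (n - j) := Tj_le_pow z Q n j hw
    have hyα := hy (j + 1) (by omega) hj1
    rw [show n + 1 - (j + 1) = n - j by omega] at hyα
    have hz : z ^ j * a ∈ Ideal.span {z ^ (j + 1)} ⊔ Q ^ (n - j) := by
      have heq : z ^ j * a = y - w := by linear_combination ha + hy'
      rw [heq]
      exact sub_mem hyα (Submodule.mem_sup_right hwQ)
    obtain ⟨p2, hp2, q, hq, heq2⟩ := Submodule.mem_sup.mp hz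
    obtain ⟨b, hb⟩ := Ideal.mem_span_singleton'.mp hp2
    have hq' : a - b * z ∈ Q ^ (n - j) := by
      refine hKEY j (n - j) _ ?_
      have : z ^ j * (a - b * z) = q := by linear_combination -heq2 - hb
      rw [this]; exact hq
    have hyeq : y = z ^ (j + 1) * b + (z ^ j * (a - b * z) + w) := by
      linear_combination -ha - hy'
    rw [hyeq]
    refine add_mem (Submodule.mem_sup_left ?_) (Submodule.mem_sup_right ?_)
    · rw [Ideal.span_singleton_pow]
      exact Ideal.mem_span_singleton'.mpr ⟨b, by ring⟩
    · show _ ∈ Tj z Q n j ⊔ Ideal.span {z} ^ j * Q ^ (n - j)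
      refine add_mem (Submodule.mem_sup_right ?_) (Submodule.mem_sup_left hw)
      exact Ideal.mul_mem_mul (Ideal.pow_mem_pow (Ideal.mem_span_singleton_self z) j) hq'

lemma hx_of_weaklyRegular {s : ℕ} (x : Fin (s + 1) → R)
    (h : RingTheory.Sequence.IsWeaklyRegular R (List.ofFn x)) :
    ∀ (i : Fin (s + 1)) (c : R), x i * c ∈ Jd x (i : ℕ) → c ∈ Jd x (i : ℕ) := by
  intro i c hc
  have hlen : (i : ℕ) < (List.ofFn x).length := by simpa using i.isLt
  have hreg := h.regular_mod_prev (i : ℕ) hlen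
  have hIdeal : (Ideal.ofList ((List.ofFn x).take (i : ℕ)) • ⊤ : Submodule R R)
      = Jd x (i : ℕ) := by
    rw [smul_eq_mul, Ideal.mul_top]
    unfold Ideal.ofList Jd
    congr 1
    ext r
    simp only [Set.mem_setOf_eq, Set.mem_image]
    constructor
    · intro hr
      obtain ⟨k, hk, hk2⟩ := List.mem_iff_getElem.mp hr
      have hk' : k < (i : ℕ) := by simp at hk; omega
      have hkN : k < s + 1 := by omega
      refine ⟨⟨k, hkN⟩, hk', ?_⟩
      rw [← hk2, List.getElem_take, List.getElem_ofFn]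
    · rintro ⟨j, hj, rfl⟩
      refine List.mem_iff_getElem.mpr ⟨(j : ℕ), by simp; omega, ?_⟩
      rw [List.getElem_take, List.getElem_ofFn]
  rw [hIdeal] at hreg
  have hget : (List.ofFn x)[(i : ℕ)] = x i := by
    rw [List.getElem_ofFn]
  rw [hget] at hreg
  have h2 : x i • (Submodule.Quotient.mk c : R ⧸ (Jd x (i : ℕ) : Submodule R R))
      = x i • (Submodule.Quotient.mk 0 : R ⧸ (Jd x (i : ℕ) : Submodule R R)) := by
    rw [← Submodule.Quotient.mk_smul, ← Submodule.Quotient.mk_smul, Submodule.Quotient.eq]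
    simpa using hc
  have h3 := hreg h2
  rw [Submodule.Quotient.eq] at h3
  simpa using h3

end Stmt5Aux

theorem stmt5 {R : Type*} [CommRing R] [IsLocalRing R] [IsNoetherianRing R] {s : ℕ}
    (x : Fin (s + 1) → R) (hmem : ∀ i, x i ∈ IsLocalRing.maximalIdeal R)
    (hreg : RingTheory.Sequence.IsRegular R (List.ofFn x)) (n : ℕ) (hn : 1 ≤ n) :
    (⨅ α ∈ Finset.Icc 1 n,
        (Ideal.span {x (Fin.last s) ^ α} +
          (Ideal.span (Set.range fun i : Fin s => x i.castSucc)) ^ (n + 1 - α)))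
      = (Ideal.span (Set.range x)) ^ n := by
  classical
  have hx := Stmt5Aux.hx_of_weaklyRegular x hreg.toIsWeaklyRegular
  have hQ' : Ideal.span (Set.range fun i : Fin s => x i.castSucc) = Stmt5Aux.Jd x s := by
    unfold Stmt5Aux.Jd
    congr 1
    ext r
    constructor
    · rintro ⟨j, rfl⟩
      exact ⟨j.castSucc, j.isLt, rfl⟩
    · rintro ⟨i, hi, rfl⟩
      exact ⟨⟨(i : ℕ), hi⟩, congrArg x (Fin.ext rfl)⟩
  have hQ : Ideal.span (Set.range x) = Ideal.span {x (Fin.last s)} ⊔ Stmt5Aux.Jd x s := by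
    unfold Stmt5Aux.Jd
    rw [← Ideal.span_union]
    congr 1
    ext r
    simp only [Set.mem_range, Set.mem_union, Set.mem_singleton_iff, Set.mem_image,
      Set.mem_setOf_eq]
    constructor
    · rintro ⟨i, rfl⟩
      by_cases h : (i : ℕ) = s
      · exact Or.inl (by rw [show i = Fin.last s from Fin.ext h])
      · refine Or.inr ⟨i, ?_, rfl⟩
        have := i.isLt
        omega
    · rintro (rfl | ⟨i, hi, rfl⟩)
      · exact ⟨Fin.last s, rfl⟩
      · exact ⟨i, rfl⟩
  have hKEY := Stmt5Aux.KEY_pow x hx (show s < s + 1 by omega)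
  apply le_antisymm
  · intro y hy
    have hy' : ∀ α, 1 ≤ α → α ≤ n →
        y ∈ Ideal.span {x (Fin.last s) ^ α} ⊔ Stmt5Aux.Jd x s ^ (n + 1 - α) := by
      intro α h1 h2
      have h3 := (Submodule.mem_iInf _).mp hy α
      have h4 := (Submodule.mem_iInf _).mp h3 (Finset.mem_Icc.mpr ⟨h1, h2⟩)
      rw [hQ', Submodule.add_eq_sup] at h4
      exact h4
    have hchain := Stmt5Aux.chain (x (Fin.last s)) (Stmt5Aux.Jd x s) n
      (fun j m r h => hKEY j m r h) y hy' n le_rfl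
    have hle : Ideal.span {x (Fin.last s)} ^ n
        ⊔ Stmt5Aux.Tj (x (Fin.last s)) (Stmt5Aux.Jd x s) n n
        ≤ (Ideal.span {x (Fin.last s)} ⊔ Stmt5Aux.Jd x s) ^ n :=
      sup_le (Stmt5Aux.pow_mono le_sup_left n) (Stmt5Aux.Tj_le_sup_pow _ _ n n le_rfl)
    rw [hQ]
    exact hle hchain
  · refine le_iInf fun α => le_iInf fun hα => ?_
    obtain ⟨h1, h2⟩ := Finset.mem_Icc.mp hα
    rw [hQ', hQ, Submodule.add_eq_sup, ← Ideal.span_singleton_pow]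
    exact Stmt5Aux.sup_pow_le_sharp _ _ n α (n + 1 - α) (by omega)
end

section
/- Let (R, m) be a Noetherian local ring of dimension d, and let b(R) = ⋂_{x, s<d} Ann((Q_s : x_{s+1})/Q_s) over all systems of parameters x. Then for every part of a system of parameters x_1,…,x_i with i < d, we have b(R) ⊆ b(R/(x_1,…,x_i)). -/
/-- `x` is a system of parameters of the local ring `R`. -/
def IsSOP (R : Type*) [CommRing R] [IsLocalRing R] {d : ℕ} (x : Fin d → R) : Prop :=
  (∀ i, x i ∈ IsLocalRing.maximalIdeal R) ∧
    (Ideal.span (Set.range x)).radical = IsLocalRing.maximalIdeal R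

/-- `Q_s = (x_1, …, x_s)`. -/
def Qup {R : Type*} [CommRing R] {d : ℕ} (x : Fin d → R) (s : ℕ) : Ideal R :=
  Ideal.span (x '' {i | (i : ℕ) < s})

/-- The Schenzel ideal `b(R)`. -/
noncomputable def bIdeal (R : Type*) [CommRing R] [IsLocalRing R] (d : ℕ) : Ideal R :=
  ⨅ (x : Fin d → R) (_ : IsSOP R x) (s : Fin d),
    Submodule.colon (Qup x (s : ℕ))
      (Submodule.colon (Qup x (s : ℕ)) (Ideal.span {x s}))

theorem stmt7 {R : Type*} [CommRing R] [IsLocalRing R] [IsNoetherianRing R] {d : ℕ}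
    (hd : ringKrullDim R = d) (x : Fin d → R) (hx : IsSOP R x) (i : ℕ) (hi : i < d)
    [IsLocalRing (R ⧸ Qup x i)] :
    bIdeal R d ≤ Ideal.comap (Ideal.Quotient.mk (Qup x i)) (bIdeal (R ⧸ Qup x i) (d - i)) := by
  intro a ha
  rw [Ideal.mem_comap]
  simp only [bIdeal, Ideal.mem_iInf] at ha ⊢
  intro y hy s
  set π : R →+* (R ⧸ Qup x i) := Ideal.Quotient.mk (Qup x i) with hπ
  have hsurj : Function.Surjective π := Ideal.Quotient.mk_surjective
  -- lifts of y
  choose y' hy' using fun k => hsurj (y k)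
  set z : Fin d → R := fun j => if h : (j : ℕ) < i then x j else y' ⟨j - i, by omega⟩ with hzdef
  have hz_lt : ∀ j : Fin d, (j : ℕ) < i → z j = x j := by
    intro j hj; simp [hzdef, hj]
  have hz_ge : ∀ j : Fin d, ¬ (j : ℕ) < i → z j = y' ⟨(j : ℕ) - i, by omega⟩ := by
    intro j hj; simp [hzdef, hj]
  have hcomap_max : Ideal.comap π (IsLocalRing.maximalIdeal (R ⧸ Qup x i)) = IsLocalRing.maximalIdeal R := by
    have h1 : (Ideal.comap π (IsLocalRing.maximalIdeal (R ⧸ Qup x i))).IsMaximal :=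
      Ideal.comap_isMaximal_of_surjective π hsurj
    exact IsLocalRing.eq_maximalIdeal h1
  have hmap : ∀ s' : ℕ, Ideal.map π (Qup z (i + s')) = Qup y s' := by
    intro s'
    show Ideal.map π (Ideal.span (z '' {j | (j : ℕ) < i + s'})) = Ideal.span (y '' {j | (j : ℕ) < s'})
    rw [Ideal.map_span]
    apply le_antisymm
    · rw [Ideal.span_le]
      rintro _ ⟨_, ⟨j, hj, rfl⟩, rfl⟩
      by_cases h : (j : ℕ) < i
      · have hz0 : π (z j) = 0 := by
          rw [hz_lt j h, hπ, Ideal.Quotient.eq_zero_iff_mem]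
          exact Ideal.subset_span ⟨j, h, rfl⟩
        exact Set.mem_of_eq_of_mem hz0 (Submodule.zero_mem _)
      · have hz1 : π (z j) = y ⟨(j : ℕ) - i, by omega⟩ := by rw [hz_ge j h, hy']
        refine Set.mem_of_eq_of_mem hz1 (Ideal.subset_span ⟨⟨(j : ℕ) - i, by omega⟩, ?_, rfl⟩)
        simp only [Set.mem_setOf_eq] at hj ⊢
        omega
    · rw [Ideal.span_le]
      rintro _ ⟨k, hk, rfl⟩
      simp only [Set.mem_setOf_eq] at hk
      have hik : i + (k : ℕ) < d := by omega
      have hzk : y k = π (z ⟨i + (k : ℕ), hik⟩) := by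
        rw [hz_ge ⟨i + (k : ℕ), hik⟩ (by simp), hy']
        congr 1
        ext
        simp
      exact Set.mem_of_eq_of_mem hzk
        (Ideal.subset_span ⟨z ⟨i + (k : ℕ), hik⟩, ⟨⟨i + (k : ℕ), hik⟩, by simp; omega, rfl⟩, rfl⟩)
  have hker : RingHom.ker π = Qup x i := Ideal.mk_ker
  have hcomap : ∀ s' : ℕ, Ideal.comap π (Qup y s') = Qup z (i + s') := by
    intro s'
    rw [← hmap s', Ideal.comap_map_of_surjective π hsurj, ← RingHom.ker_eq_comap_bot, hker,
      sup_eq_left.mpr]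
    simp only [Qup]
    rw [Ideal.span_le]
    rintro _ ⟨j, hj, rfl⟩
    simp only [Set.mem_setOf_eq] at hj
    rw [← hz_lt j hj]
    exact Ideal.subset_span ⟨j, by simp; omega, rfl⟩
  have hzSOP : IsSOP R z := by
    constructor
    · intro j
      by_cases h : (j : ℕ) < i
      · rw [hz_lt j h]; exact hx.1 j
      · rw [hz_ge j h, ← hcomap_max, Ideal.mem_comap, hy']
        exact hy.1 _
    · have h1 : Ideal.span (Set.range z) = Qup z d := by
        rw [Qup]
        congr 1
        ext r
        simp only [Set.mem_range, Set.mem_image, Set.mem_setOf_eq]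
        exact ⟨fun ⟨j, hj⟩ => ⟨j, j.isLt, hj⟩, fun ⟨j, _, hj⟩ => ⟨j, hj⟩⟩
      have h2 : Ideal.span (Set.range y) = Qup y (d - i) := by
        show Ideal.span (Set.range y) = Ideal.span (y '' {j | (j : ℕ) < d - i})
        congr 1
        ext r
        simp only [Set.mem_range, Set.mem_image, Set.mem_setOf_eq]
        exact ⟨fun ⟨j, hj⟩ => ⟨j, j.isLt, hj⟩, fun ⟨j, _, hj⟩ => ⟨j, hj⟩⟩
      have h3 : (i + (d - i)) = d := by omega
      have h4 : Qup z d = Qup z (i + (d - i)) := by rw [h3]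
      rw [h1, h4, ← hcomap, ← Ideal.comap_radical, ← h2, hy.2, hcomap_max]
  -- specialize
  have hsd : i + (s : ℕ) < d := by omega
  set t : Fin d := ⟨i + (s : ℕ), hsd⟩ with ht
  have hzt : π (z t) = y s := by
    rw [hz_ge t (by simp [ht]), hy']
    congr 1
    ext
    simp [ht]
  have haz := ha z hzSOP t
  -- final
  rw [Submodule.mem_colon]
  intro c hc
  obtain ⟨b, rfl⟩ := hsurj c
  have hb : b ∈ Submodule.colon (Qup z (t : ℕ)) (Ideal.span {z t}) := by
    rw [Ideal.mem_colon_span_singleton]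
    have : π (b * z t) ∈ Qup y (s : ℕ) := by
      rw [map_mul, hzt]
      exact Ideal.mem_colon_span_singleton.mp hc
    have := (Ideal.mem_comap).mpr this
    rwa [hcomap] at this
  have hab : a • b ∈ Qup z (t : ℕ) := Submodule.mem_colon.mp haz b hb
  have hfin : π (a * b) ∈ Qup y (s : ℕ) := by
    rw [← hmap (s : ℕ)]
    exact Ideal.mem_map_of_mem _ hab
  rw [smul_eq_mul, ← map_mul]
  exact hfin
end

section
/- Let (R,m) be a Noetherian local ring of dimension d with Schenzel ideal b(R) = ⋂_{x,s<d} Ann((Q_s:x_{s+1})/Q_s). Then for every system of parameters x_1,…,x_d, every 1 ≤ s ≤ d−1, and every n ≥ 1: b(R)^{2^{s-1}}·(Q_s^n : x_{s+1}) ⊆ Q_s^n, where Q_s = (x_1,…,x_s). -/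
section Helpers
variable {R : Type*} [CommRing R]

lemma finsetSum_le {α : Type*} (s : Finset α) (f : α → Ideal R) {X : Ideal R}
    (h : ∀ a ∈ s, f a ≤ X) : s.sum f ≤ X := by
  classical
  induction s using Finset.induction with
  | empty => simp
  | insert _ _ hni ih =>
    rename_i a s'
    rw [Finset.sum_insert hni, Ideal.add_eq_sup]
    exact sup_le (h a (Finset.mem_insert_self a s'))
      (ih fun b hb => h b (Finset.mem_insert_of_mem hb))




lemma pow_le_base (I K : Ideal R) : ∀ q : ℕ, (I + K) ^ (q + 1) ≤ I + K ^ (q + 1) := by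
  intro q
  induction q with
  | zero => simp
  | succ q ihq =>
    rw [pow_succ]
    calc (I + K) ^ (q + 1) * (I + K) ≤ (I + K ^ (q + 1)) * (I + K) := Ideal.mul_mono_left ihq
      _ = I * (I + K) + (K ^ (q+1) * I + K ^ (q+1) * K) := by ring
      _ ≤ I + K ^ (q + 1 + 1) := by
          refine sup_le (le_sup_of_le_left Ideal.mul_le_left) (sup_le ?_ ?_)
          · exact le_sup_of_le_left Ideal.mul_le_right
          · rw [← pow_succ]; exact le_sup_right

lemma pow_add_le' (I K : Ideal R) : ∀ p q : ℕ, (I + K) ^ (p + q + 1) ≤ I ^ (p + 1) + K ^ (q + 1) := by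
  intro p
  induction p with
  | zero =>
    intro q
    have := pow_le_base K I q
    rw [add_comm K I, add_comm K (I ^ (q+1))] at this
    simpa [add_comm q 1, pow_one] using
      (by simpa using pow_le_base I K q : (I + K) ^ (q + 1) ≤ I + K ^ (q + 1))
  | succ p ihp =>
    intro q
    induction q with
    | zero =>
      have h := pow_le_base K I (p + 1)
      rw [add_comm K I, add_comm K (I ^ (p + 1 + 1))] at h
      simpa using h
    | succ q ihq =>
      have e : p + 1 + (q + 1) + 1 = (p + q + 2) + 1 := by ring
      rw [e, pow_succ]
      have hT1 : (I + K) ^ (p + q + 2) ≤ I ^ (p + 1) + K ^ (q + 2) := by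
        have := ihp (q + 1); simpa [show p + (q+1) + 1 = p + q + 2 by ring] using this
      have hT2 : (I + K) ^ (p + q + 2) ≤ I ^ (p + 2) + K ^ (q + 1) := by
        simpa [show p + 1 + q + 1 = p + q + 2 by ring] using ihq
      calc (I + K) ^ (p + q + 2) * (I + K)
          = (I + K) ^ (p + q + 2) * I + (I + K) ^ (p + q + 2) * K := by ring
        _ ≤ (I ^ (p + 1) + K ^ (q + 2)) * I + (I ^ (p + 2) + K ^ (q + 1)) * K := by
            exact sup_le (le_sup_of_le_left (Ideal.mul_mono_left hT1))
              (le_sup_of_le_right (Ideal.mul_mono_left hT2))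
        _ = I ^ (p + 1) * I + K ^ (q + 2) * I + (I ^ (p + 2) * K + K ^ (q + 1) * K) := by ring
        _ ≤ I ^ (p + 1 + 1) + K ^ (q + 1 + 1) := by
            refine sup_le (sup_le ?_ ?_) (sup_le ?_ ?_)
            · rw [← pow_succ]; exact le_sup_left
            · exact le_sup_of_le_right (by simpa [pow_succ] using Ideal.mul_le_left)
            · exact le_sup_of_le_left Ideal.mul_le_left
            · rw [← pow_succ]; exact le_sup_right

lemma pow_sup_le {I K : Ideal R} {n k : ℕ} (h1 : 1 ≤ k) (h2 : k ≤ n) :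
    (I + K) ^ n ≤ I ^ (n + 1 - k) + K ^ k := by
  obtain ⟨p, rfl⟩ : ∃ p, n = p + k := ⟨n - k, by omega⟩
  obtain ⟨q, rfl⟩ : ∃ q, k = q + 1 := ⟨k - 1, by omega⟩
  have := pow_add_le' I K p q
  simpa [show p + q + 1 = p + (q+1) by ring, show p + (q + 1) + 1 - (q + 1) = p + 1 by omega]
    using this



lemma peel (Q' J : Ideal R) (w : R) (n : ℕ) :
    ∀ fuel m f, m + fuel = n → 1 ≤ m →
      (∀ k, m ≤ k → k ≤ n → f * w ^ m ∈ Q' ^ (n + 1 - k) + Ideal.span {w ^ k} + J) →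
      f * w ^ m ∈ (Finset.Ico m n).sum
          (fun i => Ideal.span {w ^ i} * Submodule.colon (Q' ^ (n - i) + J) (Ideal.span {w ^ i}))
        + Ideal.span {w ^ n} := by
  intro fuel
  induction fuel with
  | zero =>
    intro m f hmn hm hyp
    have hmn2 : m = n := by omega
    subst hmn2
    rw [Finset.Ico_self, Finset.sum_empty, zero_add]
    exact Ideal.mem_span_singleton'.2 ⟨f, rfl⟩
  | succ fuel ih =>
    intro m f hmn hm hyp
    have hmn' : m < n := by omega
    have h1 := hyp (m + 1) (by omega) (by omega)
    rw [show n + 1 - (m + 1) = n - m by omega] at h1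
    rw [Ideal.add_eq_sup, Ideal.add_eq_sup] at h1
    obtain ⟨p, hp, jj, hjj, hsum⟩ := Submodule.mem_sup.1 h1
    obtain ⟨α, hα, v, hv, hpv⟩ := Submodule.mem_sup.1 hp
    obtain ⟨gg, hgg⟩ := Ideal.mem_span_singleton'.1 hv
    have he0 : (f - gg * w) * w ^ m = α + jj := by linear_combination (-1 : R) * hsum - hpv - hgg
    have he : (f - gg * w) * w ^ m ∈ Q' ^ (n - m) + J := by
      rw [he0, Ideal.add_eq_sup]
      exact add_mem (Submodule.mem_sup_left hα) (Submodule.mem_sup_right hjj)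
    have he' : f - gg * w ∈ Submodule.colon (Q' ^ (n - m) + J) (Ideal.span {w ^ m}) :=
      Ideal.mem_colon_span_singleton.2 he
    have gpart : ∀ k, m + 1 ≤ k → k ≤ n →
        gg * w ^ (m + 1) ∈ Q' ^ (n + 1 - k) + Ideal.span {w ^ k} + J := by
      intro k hk1 hk2
      have heq : gg * w ^ (m + 1) = f * w ^ m - (f - gg * w) * w ^ m := by ring
      rw [heq]
      have hle : Q' ^ (n - m) + J ≤ Q' ^ (n + 1 - k) + Ideal.span {w ^ k} + J := by
        rw [Ideal.add_eq_sup, Ideal.add_eq_sup, Ideal.add_eq_sup]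
        exact sup_le (le_sup_of_le_left (le_sup_of_le_left
          (Ideal.pow_le_pow_right (by omega)))) le_sup_right
      exact sub_mem (hyp k (by omega) hk2) (hle he)
    have hrec := ih (m + 1) gg (by omega) (by omega) gpart
    have hS : (Finset.Ico m n).sum
          (fun i => Ideal.span {w ^ i} * Submodule.colon (Q' ^ (n - i) + J) (Ideal.span {w ^ i}))
        = Ideal.span {w ^ m} * Submodule.colon (Q' ^ (n - m) + J) (Ideal.span {w ^ m})
          + (Finset.Ico (m + 1) n).sum
          (fun i => Ideal.span {w ^ i} * Submodule.colon (Q' ^ (n - i) + J) (Ideal.span {w ^ i})) := by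
      rw [← Finset.insert_Ico_add_one_left_eq_Ico hmn', Finset.sum_insert (by simp)]
    have m1 : (f - gg * w) * w ^ m ∈ (Finset.Ico m n).sum
          (fun i => Ideal.span {w ^ i} * Submodule.colon (Q' ^ (n - i) + J) (Ideal.span {w ^ i}))
        + Ideal.span {w ^ n} := by
      rw [Ideal.add_eq_sup]
      apply Submodule.mem_sup_left
      rw [hS, Ideal.add_eq_sup]
      apply Submodule.mem_sup_left
      rw [mul_comm (f - gg * w) (w ^ m)]
      exact Ideal.mul_mem_mul (Ideal.subset_span rfl) he'
    have m2 : gg * w ^ (m + 1) ∈ (Finset.Ico m n).sum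
          (fun i => Ideal.span {w ^ i} * Submodule.colon (Q' ^ (n - i) + J) (Ideal.span {w ^ i}))
        + Ideal.span {w ^ n} := by
      revert hrec
      apply SetLike.le_def.1
      rw [hS]
      rw [Ideal.add_eq_sup, Ideal.add_eq_sup, Ideal.add_eq_sup]
      exact sup_le_sup le_sup_right (le_refl _)
    have hfin : f * w ^ m = (f - gg * w) * w ^ m + gg * w ^ (m + 1) := by ring
    rw [hfin]
    exact add_mem m1 m2

end Helpers

section Helpers2
variable {R : Type*} [CommRing R] [IsLocalRing R] {d : ℕ}


variable {R : Type*} [CommRing R] [IsLocalRing R] {d : ℕ}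

lemma isSOP_comp_pow {y : Fin d → R} (hy : IsSOP R y) (g : Fin d → Fin d)
    (hg : Function.Surjective g) (e : Fin d → ℕ) (he : ∀ i, 1 ≤ e i) :
    IsSOP R (fun i => y (g i) ^ e i) := by
  constructor
  · intro i
    exact Ideal.pow_mem_of_mem _ (hy.1 (g i)) _ (he i)
  · apply le_antisymm
    · rw [← hy.2]
      apply Ideal.radical_mono
      apply Ideal.span_le.2
      rintro _ ⟨i, rfl⟩
      exact Ideal.pow_mem_of_mem _ (Ideal.subset_span (Set.mem_range_self (g i))) _ (he i)
    · rw [← hy.2]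
      apply Ideal.radical_le_radical_iff.2
      apply Ideal.span_le.2
      rintro _ ⟨j, rfl⟩
      obtain ⟨i, rfl⟩ := hg j
      exact ⟨e i, Ideal.subset_span ⟨i, rfl⟩⟩

lemma bIdeal_le_colon {z : Fin d → R} (hz : IsSOP R z) (i : Fin d) :
    bIdeal R d ≤ Submodule.colon (Qup z (i : ℕ))
      (Submodule.colon (Qup z (i : ℕ)) (Ideal.span {z i})) :=
  iInf_le_of_le z (iInf_le_of_le hz (iInf_le _ i))

lemma bIdeal_mul_colon_le {z : Fin d → R} (hz : IsSOP R z) (i : Fin d) :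
    bIdeal R d * Submodule.colon (Qup z (i : ℕ)) (Ideal.span {z i}) ≤ Qup z (i : ℕ) := by
  rw [Ideal.mul_le]
  intro r hr u hu
  have h := bIdeal_le_colon hz i hr
  simpa using Submodule.mem_colon.1 h u hu

lemma Qup_mono (y : Fin d → R) {a b : ℕ} (h : a ≤ b) : Qup y a ≤ Qup y b :=
  Ideal.span_mono (Set.image_mono fun i hi => lt_of_lt_of_le hi h)

lemma mem_Qup (y : Fin d → R) {i : Fin d} {s : ℕ} (h : (i : ℕ) < s) : y i ∈ Qup y s :=
  Ideal.subset_span ⟨i, h, rfl⟩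

lemma Qup_succ (y : Fin d → R) (m : ℕ) (hm : m < d) :
    Qup y (m + 1) = Qup y m + Ideal.span {y ⟨m, hm⟩} := by
  unfold Qup
  have hset : {i : Fin d | (i : ℕ) < m + 1} = {i : Fin d | (i : ℕ) < m} ∪ {(⟨m, hm⟩ : Fin d)} := by
    ext i
    simp only [Set.mem_setOf_eq, Set.mem_union, Set.mem_singleton_iff, Fin.ext_iff]
    omega
  rw [hset, Set.image_union, Set.image_singleton, Ideal.span_union, Ideal.add_eq_sup]

open Finset in
lemma exists_sort_fun {d : ℕ} (A : Finset (Fin d)) {t : Fin d} (ht : t ∉ A)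
    (hcard : A.card < d) :
    ∃ g : Fin d → Fin d, Function.Surjective g ∧
      (∀ i : Fin d, (i : ℕ) < A.card → g i ∈ A) ∧
      (∀ a ∈ A, ∃ i : Fin d, (i : ℕ) < A.card ∧ g i = a) ∧
      g ⟨A.card, hcard⟩ = t := by
  classical
  set k := A.card with hk
  set B := (insert t A)ᶜ with hBdef
  have hins : (insert t A).card = k + 1 := Finset.card_insert_of_notMem ht
  have hB : B.card = d - (k + 1) := by
    rw [hBdef, Finset.card_compl, hins]; simp
  have hkd : k + 1 ≤ d := by
    have := Finset.card_le_univ (insert t A); rw [hins] at this; simpa using this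
  refine ⟨fun i => if h1 : (i : ℕ) < k then ((A.orderIsoOfFin hk.symm) ⟨i, h1⟩ : Fin d)
    else if h2 : (i : ℕ) = k then t
    else ((B.orderIsoOfFin rfl) ⟨(i : ℕ) - (k + 1), by
      have := i.isLt; omega⟩ : Fin d), ?_, ?_, ?_, ?_⟩
  · intro j
    by_cases hj : j ∈ A
    · set m := (A.orderIsoOfFin hk.symm).symm ⟨j, hj⟩ with hm
      refine ⟨⟨(m : ℕ), lt_trans m.isLt hcard⟩, ?_⟩
      have h1 : ((⟨(m : ℕ), lt_trans m.isLt hcard⟩ : Fin d) : ℕ) < k := m.isLt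
      beta_reduce
      rw [dif_pos h1]
      have : (⟨(m : ℕ), h1⟩ : Fin k) = m := rfl
      rw [this, hm]
      simp
    · by_cases hjt : j = t
      · refine ⟨⟨k, lt_of_lt_of_le (Nat.lt_succ_self k) hkd⟩, ?_⟩
        beta_reduce
        rw [dif_neg (by simp), dif_pos rfl, hjt]
      · have hjB : j ∈ B := by
          rw [hBdef, Finset.mem_compl, Finset.mem_insert]
          push_neg
          exact ⟨hjt, hj⟩
        set m := (B.orderIsoOfFin rfl).symm ⟨j, hjB⟩ with hm
        have hmd : k + 1 + (m : ℕ) < d := by have := m.isLt; omega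
        refine ⟨⟨k + 1 + (m : ℕ), hmd⟩, ?_⟩
        beta_reduce
        rw [dif_neg (by simp only [Fin.val_mk]; omega), dif_neg (by simp only [Fin.val_mk]; omega)]
        have hidx : (⟨k + 1 + (m : ℕ) - (k + 1), by have := m.isLt; omega⟩ : Fin B.card) = m := by
          apply Fin.ext; simp
        rw [hidx, hm]
        simp
  · intro i hi
    beta_reduce
    rw [dif_pos hi]
    exact ((A.orderIsoOfFin hk.symm) ⟨i, hi⟩).2
  · intro a ha
    set m := (A.orderIsoOfFin hk.symm).symm ⟨a, ha⟩ with hm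
    refine ⟨⟨(m : ℕ), lt_trans m.isLt hcard⟩, m.isLt, ?_⟩
    beta_reduce
    rw [dif_pos (show ((⟨(m : ℕ), lt_trans m.isLt hcard⟩ : Fin d) : ℕ) < k from m.isLt)]
    have : (⟨(m : ℕ), m.isLt⟩ : Fin k) = m := rfl
    rw [this, hm]
    simp
  · beta_reduce
    rw [dif_neg (by simp [hk]), dif_pos rfl]
lemma gcolon {y : Fin d → R} (hy : IsSOP R y) (A : Finset (Fin d)) {t : Fin d} (ht : t ∉ A)
    (c : Fin d → ℕ) (hc : ∀ i, 1 ≤ c i) {e : ℕ} (he : 1 ≤ e) :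
    bIdeal R d * Submodule.colon (Ideal.span ((fun i => y i ^ c i) '' A)) (Ideal.span {y t ^ e})
      ≤ Ideal.span ((fun i => y i ^ c i) '' A) := by
  classical
  have hcard : A.card < d := by
    have h1 : (insert t A).card = A.card + 1 := Finset.card_insert_of_notMem ht
    have h2 := Finset.card_le_univ (insert t A)
    simp only [Fintype.card_fin] at h2
    omega
  obtain ⟨g, hgsurj, hgmem, hgonto, hgt⟩ := exists_sort_fun A ht hcard
  set eexp : Fin d → ℕ := fun i =>
    if (i : ℕ) < A.card then c (g i) else if (i : ℕ) = A.card then e else 1 with heexp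
  have heexp1 : ∀ i, 1 ≤ eexp i := by
    intro i
    rw [heexp]
    dsimp only
    split
    · exact hc _
    · split
      · exact he
      · exact le_refl 1
  have hz : IsSOP R (fun i => y (g i) ^ eexp i) := isSOP_comp_pow hy g hgsurj eexp heexp1
  have key := bIdeal_mul_colon_le hz ⟨A.card, hcard⟩
  have himg : (fun i => y (g i) ^ eexp i) '' {i : Fin d | (i : ℕ) < A.card}
      = (fun i => y i ^ c i) '' (A : Set (Fin d)) := by
    ext r
    constructor
    · rintro ⟨i, hi, rfl⟩
      simp only [Set.mem_setOf_eq] at hi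
      refine ⟨g i, hgmem i hi, ?_⟩
      simp only [heexp, if_pos hi]
    · rintro ⟨a, ha, rfl⟩
      obtain ⟨i, hik, rfl⟩ := hgonto a ha
      exact ⟨i, hik, by simp only [heexp, if_pos hik]⟩
  have hcolel : y (g (⟨A.card, hcard⟩ : Fin d)) ^ eexp (⟨A.card, hcard⟩ : Fin d) = y t ^ e := by
    simp [heexp, hgt]
  rw [show Qup (fun i => y (g i) ^ eexp i) ((⟨A.card, hcard⟩ : Fin d) : ℕ)
      = Ideal.span ((fun i => y i ^ c i) '' (A : Set (Fin d))) from by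
        unfold Qup; rw [Fin.val_mk, himg], hcolel] at key
  exact key

lemma ideal_pow_mono {S : Type*} [CommRing S] {I K : Ideal S} (h : I ≤ K) (n : ℕ) :
    I ^ n ≤ K ^ n := by
  induction n with
  | zero => simp
  | succ n ih => rw [pow_succ, pow_succ]; exact Ideal.mul_mono ih h

lemma Pmain : ∀ t : ℕ, ∀ y : Fin d → R, IsSOP R y → ∀ (hs : t + 1 < d) (n : ℕ), 1 ≤ n →
    ∀ T : Finset (Fin d), (∀ i ∈ T, t + 1 < (i : ℕ)) → ∀ c : Fin d → ℕ, (∀ i, 1 ≤ c i) →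
    bIdeal R d ^ 2 ^ t *
      Submodule.colon (Qup y (t + 1) ^ n + Ideal.span ((fun i => y i ^ c i) '' T))
        (Ideal.span {y ⟨t + 1, hs⟩})
      ≤ Qup y (t + 1) ^ n + Ideal.span ((fun i => y i ^ c i) '' T) := by
  intro t
  induction t with
  | zero =>
    intro y hy hs n hn T hT c hc
    have hd2 : 1 < d := hs
    set z0 : Fin d := ⟨0, by omega⟩ with hz0
    set z1 : Fin d := ⟨1, hs⟩ with hz1
    set cc : Fin d → ℕ := fun i => if (i : ℕ) = 0 then n else c i with hcc
    have hQ1 : Qup y 1 = Ideal.span {y z0} := by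
      unfold Qup
      congr 1
      ext r
      constructor
      · rintro ⟨i, hi, rfl⟩
        simp only [Set.mem_setOf_eq] at hi
        have : i = z0 := by apply Fin.ext; simpa using hi
        rw [this]; rfl
      · rintro rfl
        exact ⟨z0, by simp [hz0], rfl⟩
    have himg : (fun i => y i ^ cc i) '' (insert z0 T : Finset (Fin d)) =
        insert (y z0 ^ n) ((fun i => y i ^ c i) '' T) := by
      have hTimg : (fun i => y i ^ cc i) '' (T : Set (Fin d)) = (fun i => y i ^ c i) '' T := by
        apply Set.image_congr
        intro i hi
        have h0 : (i : ℕ) ≠ 0 := by have := hT i hi; omega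
        simp [hcc, h0]
      rw [Finset.coe_insert, Set.image_insert_eq, hTimg]
      congr 1
    have hID : Qup y 1 ^ n + Ideal.span ((fun i => y i ^ c i) '' T)
        = Ideal.span ((fun i => y i ^ cc i) '' (insert z0 T : Finset (Fin d))) := by
      rw [himg, Ideal.span_insert, hQ1, Ideal.span_singleton_pow, Ideal.add_eq_sup]
    have hnotmem : z1 ∉ insert z0 T := by
      simp only [Finset.mem_insert]
      push_neg
      constructor
      · intro h; rw [Fin.ext_iff] at h; simp [hz0, hz1] at h
      · intro h; exact absurd (hT z1 h) (by simp [hz1])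
    have hcc1 : ∀ i, 1 ≤ cc i := by
      intro i; simp only [hcc]; split
      · exact hn
      · exact hc i
    have := gcolon hy (insert z0 T) hnotmem cc hcc1 (e := 1) (le_refl 1)
    rw [pow_one (y z1)] at this
    simpa [hID, pow_one] using this
  | succ t ih =>
    intro y hy hs n hn T hT c hc
    have hs1 : t + 1 < d := by omega
    set s1Idx : Fin d := ⟨t + 1, hs1⟩ with hs1Idx
    set sIdx : Fin d := ⟨t + 2, hs⟩ with hsIdx
    set w : R := y s1Idx with hw
    set Q' : Ideal R := Qup y (t + 1) with hQ'
    set J : Ideal R := Ideal.span ((fun i => y i ^ c i) '' T) with hJ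
    have hQdec : Qup y (t + 2) = Q' + Ideal.span {w} := Qup_succ y (t + 1) hs1
    have hne : s1Idx ≠ sIdx := by
      intro h; rw [Fin.ext_iff] at h; simp [hs1Idx, hsIdx] at h
    -- claim 1
    have claim1 : ∀ k, 1 ≤ k → k ≤ n →
        bIdeal R d ^ 2 ^ t *
          Submodule.colon (Qup y (t + 2) ^ n + J) (Ideal.span {y sIdx})
          ≤ Q' ^ (n + 1 - k) + Ideal.span {w ^ k} + J := by
      intro k hk1 hk2
      set swp : Fin d → Fin d := fun i => if i = s1Idx then sIdx else if i = sIdx then s1Idx else i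
        with hswp
      have hswpsurj : Function.Surjective swp := by
        intro j
        by_cases h1 : j = sIdx
        · exact ⟨s1Idx, by simp [hswp, h1]⟩
        · by_cases h2 : j = s1Idx
          · exact ⟨sIdx, by simp [hswp, h2, hne.symm, if_neg]⟩
          · exact ⟨j, by simp [hswp, h2, h1]⟩
      set z : Fin d → R := fun i => y (swp i) ^ (if i = sIdx then k else 1) with hz
      have hzSOP : IsSOP R z := by
        apply isSOP_comp_pow hy swp hswpsurj
        intro i; split
        · exact hk1
        · exact le_refl 1
      have hE1 : Qup z (t + 1) = Q' := by
        unfold Qup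
        rw [hQ']
        unfold Qup
        congr 1
        apply Set.image_congr
        intro i hi
        simp only [Set.mem_setOf_eq] at hi
        have h1 : i ≠ s1Idx := by intro h; rw [h] at hi; simp [hs1Idx] at hi
        have h2 : i ≠ sIdx := by intro h; rw [h] at hi; exact absurd hi (by simp [hsIdx])
        simp [hz, hswp, h1, h2]
      have hE2 : z s1Idx = y sIdx := by
        simp [hz, hswp, hne]
      have hE3 : Ideal.span ((fun i => z i ^ (if i = sIdx then 1 else c i)) ''
          (insert sIdx T : Finset (Fin d))) = Ideal.span {w ^ k} + J := by
        rw [Finset.coe_insert, Set.image_insert_eq]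
        have hg1 : z sIdx ^ (if sIdx = sIdx then 1 else c sIdx) = w ^ k := by
          simp [hz, hswp, hne.symm, hw]
        have hg2 : (fun i => z i ^ (if i = sIdx then 1 else c i)) '' T
            = (fun i => y i ^ c i) '' T := by
          apply Set.image_congr
          intro i hi
          have hi1 : i ≠ sIdx := by
            intro h; have h3 := hT i hi; rw [h] at h3
            exact absurd h3 (by simp [hsIdx])
          have hi2 : i ≠ s1Idx := by
            intro h; have h3 := hT i hi; rw [h] at h3
            exact absurd h3 (by simp [hs1Idx])
          simp [hz, hswp, hi1, hi2]
        rw [hg1, hg2, Ideal.span_insert, hJ, Ideal.add_eq_sup]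
      have hT' : ∀ i ∈ insert sIdx T, t + 1 < (i : ℕ) := by
        intro i hi
        rcases Finset.mem_insert.1 hi with h | h
        · rw [h]; simp [hsIdx]
        · have := hT i h; omega
      have hc' : ∀ i, 1 ≤ (if i = sIdx then 1 else c i) := by
        intro i; split
        · exact le_refl 1
        · exact hc i
      have hihz := ih z hzSOP hs1 (n + 1 - k) (by omega) (insert sIdx T) hT'
        (fun i => if i = sIdx then 1 else c i) hc'
      rw [hE1, hE3] at hihz
      have hE2' : z ⟨t + 1, hs1⟩ = y sIdx := hE2
      rw [hE2'] at hihz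
      have hQn : Qup y (t + 2) ^ n + J ≤ Q' ^ (n + 1 - k) + (Ideal.span {w ^ k} + J) := by
        have h0 : Qup y (t + 2) ^ n ≤ Q' ^ (n + 1 - k) + Ideal.span {w ^ k} := by
          rw [hQdec]
          calc (Q' + Ideal.span {w}) ^ n ≤ Q' ^ (n + 1 - k) + Ideal.span {w} ^ k :=
              pow_sup_le hk1 hk2
            _ = Q' ^ (n + 1 - k) + Ideal.span {w ^ k} := by rw [Ideal.span_singleton_pow]
        rw [← add_assoc, Ideal.add_eq_sup, Ideal.add_eq_sup]
        exact sup_le_sup h0 (le_refl J)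
      calc bIdeal R d ^ 2 ^ t *
            Submodule.colon (Qup y (t + 2) ^ n + J) (Ideal.span {y sIdx})
          ≤ bIdeal R d ^ 2 ^ t *
            Submodule.colon (Q' ^ (n + 1 - k) + (Ideal.span {w ^ k} + J))
              (Ideal.span {y sIdx}) :=
            Ideal.mul_mono_right (Submodule.colon_mono hQn (le_refl _))
        _ ≤ Q' ^ (n + 1 - k) + (Ideal.span {w ^ k} + J) := hihz
        _ = Q' ^ (n + 1 - k) + Ideal.span {w ^ k} + J := (add_assoc _ _ _).symm
    -- claim 3
    have claim3 : ∀ i, 1 ≤ i → i < n →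
        bIdeal R d ^ 2 ^ t * Submodule.colon (Q' ^ (n - i) + J) (Ideal.span {w ^ i})
          ≤ Q' ^ (n - i) + J := by
      intro i hi1 hi2
      set z : Fin d → R := fun i' => y i' ^ (if i' = s1Idx then i else 1) with hz
      have hzSOP : IsSOP R z := by
        apply isSOP_comp_pow hy id Function.surjective_id
        intro i'; split
        · exact hi1
        · exact le_refl 1
      have hE1 : Qup z (t + 1) = Q' := by
        unfold Qup
        rw [hQ']
        unfold Qup
        congr 1
        apply Set.image_congr
        intro i' hi'
        simp only [Set.mem_setOf_eq] at hi'
        have h1 : i' ≠ s1Idx := by intro h; rw [h] at hi'; simp [hs1Idx] at hi'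
        simp [hz, h1]
      have hE2 : z s1Idx = w ^ i := by simp [hz, hw]
      have hE3 : Ideal.span ((fun i' => z i' ^ (if i' = s1Idx then 1 else c i')) ''
          (T : Set (Fin d))) = J := by
        rw [hJ]
        congr 1
        apply Set.image_congr
        intro i' hi'
        have h1 : i' ≠ s1Idx := by
          intro h; have h3 := hT i' hi'; rw [h] at h3
          exact absurd h3 (by simp [hs1Idx])
        simp [hz, h1]
      have hc' : ∀ i', 1 ≤ (if i' = s1Idx then 1 else c i') := by
        intro i'; split
        · exact le_refl 1
        · exact hc i'
      have hT2 : ∀ i' ∈ T, t + 1 < (i' : ℕ) := by intro i' hi'; have := hT i' hi'; omega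
      have hihz := ih z hzSOP hs1 (n - i) (by omega) T hT2
        (fun i' => if i' = s1Idx then 1 else c i') hc'
      rw [hE1, hE3] at hihz
      have hE2' : z ⟨t + 1, hs1⟩ = w ^ i := hE2
      rw [hE2'] at hihz
      exact hihz
    -- assembly
    have hexp : (2 : ℕ) ^ (t + 1) = 2 ^ t + 2 ^ t := by ring
    rw [hexp, pow_add, mul_assoc]
    rw [Ideal.mul_le]
    intro r hr u hu
    -- memberships of u
    have humem : ∀ k, 1 ≤ k → k ≤ n →
        u ∈ Q' ^ (n + 1 - k) + Ideal.span {w ^ k} + J := fun k h1 h2 => claim1 k h1 h2 hu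
    have hu1 := humem 1 (le_refl 1) hn
    rw [show n + 1 - 1 = n by omega] at hu1
    rw [Ideal.add_eq_sup, Ideal.add_eq_sup] at hu1
    obtain ⟨p, hp, jj, hjj, hsum⟩ := Submodule.mem_sup.1 hu1
    obtain ⟨a, ha, v, hv, hpv⟩ := Submodule.mem_sup.1 hp
    obtain ⟨f, hf⟩ := Ideal.mem_span_singleton'.1 hv
    have hfw : ∀ k, 1 ≤ k → k ≤ n →
        f * w ^ 1 ∈ Q' ^ (n + 1 - k) + Ideal.span {w ^ k} + J := by
      intro k h1 h2
      have heq : f * w ^ 1 = u - a - jj := by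
        rw [pow_one]
        linear_combination hsum + hpv + hf
      rw [heq]
      rw [Ideal.add_eq_sup, Ideal.add_eq_sup]
      refine sub_mem (sub_mem ?_ ?_) ?_
      · have := humem k h1 h2
        rwa [Ideal.add_eq_sup, Ideal.add_eq_sup] at this
      · exact Submodule.mem_sup_left (Submodule.mem_sup_left
          (Ideal.pow_le_pow_right (by omega) ha))
      · exact Submodule.mem_sup_right hjj
    have hpeel := peel Q' J w n (n - 1) 1 f (by omega) (le_refl 1) hfw
    set SS : Ideal R := (Finset.Ico 1 n).sum
        (fun i => Ideal.span {w ^ i} * Submodule.colon (Q' ^ (n - i) + J) (Ideal.span {w ^ i}))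
      with hSS
    rw [Ideal.add_eq_sup] at hpeel
    have humemV : u ∈ (Q' ^ n ⊔ J) ⊔ (SS ⊔ Ideal.span {w ^ n}) := by
      have hueq : u = (a + jj) + f * w ^ 1 := by
        rw [pow_one]
        linear_combination (-1 : R) * hsum - hpv - hf
      rw [hueq]
      exact add_mem (Submodule.mem_sup_left (add_mem (Submodule.mem_sup_left ha)
        (Submodule.mem_sup_right hjj))) (Submodule.mem_sup_right hpeel)
    have hwQ : Ideal.span {w} ≤ Qup y (t + 2) := by
      rw [Ideal.span_le]
      rintro _ rfl
      exact mem_Qup y (by simp [hs1Idx])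
    have hQ'Q : Q' ≤ Qup y (t + 2) := Qup_mono y (by omega)
    have hV : bIdeal R d ^ 2 ^ t * ((Q' ^ n ⊔ J) ⊔ (SS ⊔ Ideal.span {w ^ n}))
        ≤ Qup y (t + 2) ^ n + J := by
      rw [Ideal.mul_sup, Ideal.mul_sup, Ideal.mul_sup, Ideal.add_eq_sup]
      refine sup_le (sup_le ?_ ?_) (sup_le ?_ ?_)
      · exact le_sup_of_le_left (le_trans Ideal.mul_le_right (ideal_pow_mono hQ'Q n))
      · exact le_sup_of_le_right Ideal.mul_le_right
      · -- sum part
        rw [hSS, Finset.mul_sum]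
        apply finsetSum_le
        intro i hi
        rw [Finset.mem_Ico] at hi
        have heq : bIdeal R d ^ 2 ^ t *
            (Ideal.span {w ^ i} * Submodule.colon (Q' ^ (n - i) + J) (Ideal.span {w ^ i}))
            = Ideal.span {w ^ i} *
              (bIdeal R d ^ 2 ^ t * Submodule.colon (Q' ^ (n - i) + J) (Ideal.span {w ^ i})) := by
          ring
        rw [heq]
        calc Ideal.span {w ^ i} *
              (bIdeal R d ^ 2 ^ t * Submodule.colon (Q' ^ (n - i) + J) (Ideal.span {w ^ i}))
            ≤ Ideal.span {w ^ i} * (Q' ^ (n - i) + J) :=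
              Ideal.mul_mono_right (claim3 i hi.1 hi.2)
          _ ≤ Qup y (t + 2) ^ n ⊔ J := by
              rw [Ideal.add_eq_sup, Ideal.mul_sup]
              refine sup_le ?_ (le_sup_of_le_right Ideal.mul_le_right)
              apply le_sup_of_le_left
              calc Ideal.span {w ^ i} * Q' ^ (n - i)
                  ≤ Qup y (t + 2) ^ i * Qup y (t + 2) ^ (n - i) := by
                    apply Ideal.mul_mono
                    · rw [← Ideal.span_singleton_pow]
                      exact ideal_pow_mono hwQ i
                    · exact ideal_pow_mono hQ'Q (n - i)
                _ = Qup y (t + 2) ^ n := by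
                    rw [← pow_add]
                    congr 1
                    omega
      · apply le_sup_of_le_left
        calc bIdeal R d ^ 2 ^ t * Ideal.span {w ^ n} ≤ Ideal.span {w ^ n} := Ideal.mul_le_right
          _ ≤ Qup y (t + 2) ^ n := by
              rw [← Ideal.span_singleton_pow]
              exact ideal_pow_mono hwQ n
    exact hV (Ideal.mul_mem_mul hr humemV)

end Helpers2


theorem stmt8 {R : Type*} [CommRing R] [IsLocalRing R] [IsNoetherianRing R] {d : ℕ}
    (hd : ringKrullDim R = d) (x : Fin d → R) (hx : IsSOP R x)
    (s : ℕ) (hs : 1 ≤ s) (hsd : s < d) (n : ℕ) (hn : 1 ≤ n) :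
    bIdeal R d ^ 2 ^ (s - 1) *
        Submodule.colon (Qup x s ^ n) (Ideal.span {x ⟨s, hsd⟩})
      ≤ Qup x s ^ n := by
  obtain ⟨t, rfl⟩ : ∃ t, s = t + 1 := ⟨s - 1, by omega⟩
  have h := Pmain t x hx hsd n hn ∅ (by simp) (fun _ => 1) (fun _ => le_refl 1)
  simp only [Finset.coe_empty, Set.image_empty, Ideal.span_empty] at h
  rw [Ideal.add_eq_sup, sup_bot_eq] at h
  simpa [Nat.add_sub_cancel] using h
end

section
/- Let (R,m) be a Noetherian local ring of dimension d with Schenzel ideal b(R). Then for every system of parameters x_1,…,x_d, every 1 ≤ s ≤ d, and every n ≥ 1: b(R)^{2^{s-1}−1}·(⋂_{α ∈ Λ_{s,n}} Q_s(α)) ⊆ Q_s^n, where Q_s(α) = (x_1^{α_1},…,x_s^{α_s}) and Λ_{s,n} is the set of s-tuples of positive integers summing to s+n−1. -/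
/-- `α ∈ Λ_{s,n}`: the first `s` entries are positive and sum to `s + n - 1`. -/
def IsLam {d : ℕ} (s n : ℕ) (α : Fin d → ℕ) : Prop :=
  (∀ i : Fin d, (i : ℕ) < s → 1 ≤ α i) ∧
    (∑ i ∈ Finset.univ.filter (fun i : Fin d => (i : ℕ) < s), α i) = s + n - 1

/-- `Q_s(α) = (x_1^{α_1}, …, x_s^{α_s})`. -/
def PQ {R : Type*} [CommRing R] {d : ℕ} (x : Fin d → R) (s : ℕ) (α : Fin d → ℕ) : Ideal R :=
  Ideal.span ((fun i => x i ^ α i) '' {i | (i : ℕ) < s})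

section Helpers

open Finset

variable {R : Type*} [CommRing R] {d : ℕ}

lemma fin_filter_succ {s : ℕ} (h : s < d) :
    Finset.univ.filter (fun i : Fin d => (i : ℕ) < s + 1)
      = insert ⟨s, h⟩ (Finset.univ.filter (fun i : Fin d => (i : ℕ) < s)) := by
  ext i
  simp only [mem_filter, mem_univ, true_and, mem_insert, Fin.ext_iff]
  omega

lemma set_lt_succ {s : ℕ} (h : s < d) :
    {i : Fin d | (i : ℕ) < s + 1} = insert (⟨s, h⟩ : Fin d) {i : Fin d | (i : ℕ) < s} := by
  ext i
  simp only [Set.mem_setOf_eq, Set.mem_insert_iff, Fin.ext_iff]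
  omega

lemma fin_filter_card : ∀ {s : ℕ}, s ≤ d →
    (Finset.univ.filter (fun i : Fin d => (i : ℕ) < s)).card = s
  | 0, _ => by simp
  | (s+1), h => by
      have hlt : s < d := lt_of_lt_of_le (Nat.lt_succ_self s) h
      rw [fin_filter_succ hlt, Finset.card_insert_of_notMem (by simp), fin_filter_card hlt.le]

lemma lam_base {s : ℕ} (hsd : s ≤ d) {β : Fin d → ℕ} (hβ : IsLam s 1 β)
    {i : Fin d} (hi : (i : ℕ) < s) : β i = 1 := by
  obtain ⟨h1, h2⟩ := hβ
  have hi' : i ∈ Finset.univ.filter (fun i : Fin d => (i : ℕ) < s) := by simp [hi]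
  have hsum := Finset.add_sum_erase _ β hi'
  have hrest : ((Finset.univ.filter (fun i : Fin d => (i : ℕ) < s)).erase i).card
      ≤ ∑ j ∈ (Finset.univ.filter (fun i : Fin d => (i : ℕ) < s)).erase i, β j := by
    calc ((Finset.univ.filter (fun i : Fin d => (i : ℕ) < s)).erase i).card
        = ∑ _j ∈ (Finset.univ.filter (fun i : Fin d => (i : ℕ) < s)).erase i, 1 := by simp
      _ ≤ _ := Finset.sum_le_sum (fun j hj => h1 j (by
          have := Finset.mem_of_mem_erase hj
          simpa using this))
  have hcard := Finset.card_erase_of_mem hi'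
  rw [fin_filter_card hsd] at hcard
  have h1i := h1 i hi
  omega

lemma PQ_eq_Qup {x : Fin d → R} {s : ℕ} (hsd : s ≤ d) {β : Fin d → ℕ}
    (hβ : IsLam s 1 β) : PQ x s β = Qup x s := by
  unfold PQ Qup
  congr 1
  apply Set.image_congr
  intro i hi
  rw [lam_base hsd hβ hi, pow_one]

lemma pow_le_PQ {x : Fin d → R} : ∀ (m : ℕ) {s : ℕ}, 1 ≤ m → s ≤ d → ∀ {β : Fin d → ℕ},
    IsLam s m β → Qup x s ^ m ≤ PQ x s β := by
  intro m
  induction m with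
  | zero => intro s h; omega
  | succ m ih =>
    intro s _ hsd β hβ
    rcases Nat.eq_zero_or_pos m with hm | hm
    · subst hm
      rw [pow_one, PQ_eq_Qup hsd hβ]
    -- m ≥ 1, exponent m+1
    rw [pow_succ']
    rw [Ideal.mul_le]
    intro z hz r hr
    have key : ∀ i : Fin d, (i : ℕ) < s → x i * r ∈ PQ x s β := by
      intro i hi
      have hβi := hβ.1 i hi
      rcases Nat.lt_or_ge (β i) 2 with hb1 | hb2
      · -- β i = 1 : x i is a generator of PQ x s β
        have h1 : β i = 1 := by omega
        have hgen : x i ∈ PQ x s β := by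
          apply Ideal.subset_span
          exact ⟨i, hi, by show x i ^ β i = x i; rw [h1, pow_one]⟩
        exact Ideal.mul_mem_right _ _ hgen
      · -- β i ≥ 2
        set β' := Function.update β i (β i - 1) with hβ'
        have hβ'lam : IsLam s m β' := by
          constructor
          · intro j hj
            rcases eq_or_ne j i with rfl | hne
            · simp [hβ', Function.update_self]; omega
            · simp [hβ', Function.update_of_ne hne]
              exact hβ.1 j hj
          · have hi' : i ∈ Finset.univ.filter (fun j : Fin d => (j : ℕ) < s) := by simp [hi]
            rw [hβ', Finset.sum_update_of_mem hi']
            have h2 := hβ.2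
            rw [← Finset.add_sum_erase _ β hi', Finset.erase_eq] at h2
            omega
        have hr' : r ∈ PQ x s β' := ih hm hsd hβ'lam hr
        -- now show x i * (anything in PQ β') ∈ PQ β
        have hcolon : PQ x s β' ≤ Submodule.colon (PQ x s β) (Ideal.span {x i}) := by
          unfold PQ
          rw [Ideal.span_le]
          rintro _ ⟨j, hj, rfl⟩
          rw [SetLike.mem_coe, show (Ideal.span {x i} : Ideal R) = Submodule.span R {x i} from rfl,
            Submodule.mem_colon_span_singleton, smul_eq_mul]
          show x j ^ β' j * x i ∈ Ideal.span ((fun i => x i ^ β i) '' {i | (i : ℕ) < s})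
          rcases eq_or_ne j i with rfl | hne
          · have : x j ^ β' j * x j = x j ^ β j := by
              rw [hβ', Function.update_self, ← pow_succ]
              congr 1
              omega
            rw [this]
            exact Ideal.subset_span ⟨j, hj, rfl⟩
          · rw [hβ', Function.update_of_ne hne]
            exact Ideal.mul_mem_right _ _ (Ideal.subset_span ⟨j, hj, rfl⟩)
        have := hcolon hr'
        rw [show (Ideal.span {x i} : Ideal R) = Submodule.span R {x i} from rfl,
          Submodule.mem_colon_span_singleton, smul_eq_mul] at this
        rw [mul_comm]
        exact this
    unfold Qup at hz
    -- span induction on z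
    have hsub : Ideal.span (x '' {i : Fin d | (i : ℕ) < s})
        ≤ Submodule.colon (PQ x s β) (Ideal.span {r}) := by
      rw [Ideal.span_le]
      rintro _ ⟨i, hi, rfl⟩
      rw [SetLike.mem_coe, show (Ideal.span {r} : Ideal R) = Submodule.span R {r} from rfl,
        Submodule.mem_colon_span_singleton, smul_eq_mul]
      exact key i hi
    have := hsub hz
    rw [show (Ideal.span {r} : Ideal R) = Submodule.span R {r} from rfl,
      Submodule.mem_colon_span_singleton, smul_eq_mul] at this
    exact this

variable [IsLocalRing R]

lemma colon_mono_left {N N' P : Ideal R} (h : N ≤ N') :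
    Submodule.colon N P ≤ Submodule.colon N' P := fun _ hr =>
  Submodule.mem_colon.2 fun p hp => h (Submodule.mem_colon.1 hr p hp)

lemma isSOP_comp_pow_s9 {x : Fin d → R} (hx : IsSOP R x) (σ : Fin d → Fin d)
    (hσ : Function.Surjective σ) (E : Fin d → ℕ) (hE : ∀ i, 1 ≤ E i) :
    IsSOP R (fun kk => x (σ kk) ^ E (σ kk)) := by
  constructor
  · intro i
    exact Ideal.pow_mem_of_mem _ (hx.1 (σ i)) _ (hE (σ i))
  · have hr : Set.range (fun kk => x (σ kk) ^ E (σ kk))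
        = Set.range (fun i => x i ^ E i) := by
      have : (fun kk => x (σ kk) ^ E (σ kk)) = (fun i => x i ^ E i) ∘ σ := rfl
      rw [this, Set.range_comp, hσ.range_eq, Set.image_univ]
    rw [hr]
    have h1 : Ideal.span (Set.range (fun i => x i ^ E i)) ≤ Ideal.span (Set.range x) := by
      rw [Ideal.span_le]
      rintro _ ⟨i, rfl⟩
      exact Ideal.pow_mem_of_mem _ (Ideal.subset_span (Set.mem_range_self i)) _ (hE i)
    have h2 : Ideal.span (Set.range x)
        ≤ (Ideal.span (Set.range (fun i => x i ^ E i))).radical := by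
      rw [Ideal.span_le]
      rintro _ ⟨i, rfl⟩
      exact ⟨E i, Ideal.subset_span (Set.mem_range_self i)⟩
    apply le_antisymm
    · rw [← hx.2]
      exact Ideal.radical_mono h1
    · rw [← hx.2]
      calc (Ideal.span (Set.range x)).radical
          ≤ ((Ideal.span (Set.range (fun i => x i ^ E i))).radical).radical :=
            Ideal.radical_mono h2
        _ = _ := (Ideal.span _).radical_idem

lemma colon_key {x : Fin d → R} (hx : IsSOP R x) (S : Finset (Fin d)) (a : Fin d → ℕ)
    (ha : ∀ i ∈ S, 1 ≤ a i) (t : Fin d) (ht : t ∉ S) (j : ℕ) (hj : 1 ≤ j) :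
    bIdeal R d * Submodule.colon (Ideal.span ((fun i => x i ^ a i) '' ↑S))
        (Ideal.span {x t ^ j})
      ≤ Ideal.span ((fun i => x i ^ a i) '' ↑S) := by
  classical
  set c := S.card with hc
  have hcd : c < d := by
    have hsub : S ⊆ Finset.univ.erase t := by
      intro i hi
      exact Finset.mem_erase.2 ⟨fun h => ht (h ▸ hi), Finset.mem_univ i⟩
    have h1 : S.card ≤ (Finset.univ.erase t).card := Finset.card_le_card hsub
    have h2 : (Finset.univ.erase t).card = d - 1 := by
      rw [Finset.card_erase_of_mem (Finset.mem_univ t), Finset.card_univ, Fintype.card_fin]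
    have := t.2
    omega
  set L : List (Fin d) := S.sort (·≤·) ++ t :: (Sᶜ.erase t).sort (·≤·) with hL
  have hlen : L.length = d := by
    have h2 : (Sᶜ.erase t).card = d - c - 1 := by
      rw [Finset.card_erase_of_mem (by simp [ht]), Finset.card_compl, Fintype.card_fin, hc]
    simp only [hL, List.length_append, List.length_cons, Finset.length_sort, h2, ← hc]
    omega
  have hnd : L.Nodup := by
    apply List.Nodup.append
    · exact Finset.sort_nodup _ _
    · apply List.nodup_cons.2
      constructor
      · intro hmem
        rw [Finset.mem_sort] at hmem
        exact (Finset.notMem_erase t _) hmem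
      · exact Finset.sort_nodup _ _
    · rw [List.disjoint_left]
      intro i hi1 hi2
      rw [Finset.mem_sort] at hi1
      rcases List.mem_cons.1 hi2 with rfl | hmem
      · exact ht hi1
      · rw [Finset.mem_sort, Finset.mem_erase, Finset.mem_compl] at hmem
        exact hmem.2 hi1
  set σ : Fin d → Fin d := fun kk => L.get (Fin.cast hlen.symm kk) with hσdef
  have hσinj : Function.Injective σ := by
    intro p q hpq
    simp only [hσdef] at hpq
    have h0 := List.nodup_iff_injective_get.1 hnd hpq
    have h1 := congrArg Fin.val h0
    exact Fin.ext h1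
  have hσsurj := Finite.injective_iff_surjective.1 hσinj
  have hget1 : ∀ (kk : Fin d), (kk : ℕ) < c → σ kk ∈ S := by
    intro kk hkk
    have h1 : (kk : ℕ) < (S.sort (·≤·)).length := lt_of_lt_of_le hkk (Finset.length_sort _).ge
    have h2 : σ kk = (S.sort (·≤·))[(kk : ℕ)]'h1 := by
      simp only [hσdef]
      rw [List.get_eq_getElem]
      exact List.getElem_append_left h1
    rw [h2, ← Finset.mem_sort (α := Fin d) (·≤·)]
    exact List.getElem_mem _
  have hget2 : ∀ i ∈ S, ∃ kk : Fin d, (kk : ℕ) < c ∧ σ kk = i := by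
    intro i hi
    have hmem : i ∈ S.sort (·≤·) := (Finset.mem_sort _).2 hi
    rw [List.mem_iff_get] at hmem
    obtain ⟨idx, hidx⟩ := hmem
    have hidxc : (idx : ℕ) < c := lt_of_lt_of_le idx.2 (Finset.length_sort _).le
    refine ⟨⟨idx, lt_of_lt_of_le hidxc hcd.le⟩, hidxc, ?_⟩
    simp only [hσdef]
    rw [List.get_eq_getElem]
    exact (List.getElem_append_left (lt_of_lt_of_le hidxc (Finset.length_sort _).ge)).trans
      (by rw [← hidx, List.get_eq_getElem])
  have hgetc : σ ⟨c, hcd⟩ = t := by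
    simp only [hσdef]
    rw [List.get_eq_getElem]
    exact (List.getElem_append_right (Finset.length_sort (r := ((·≤·) : Fin d → Fin d → Prop)) (s := S) ).le).trans
      (by simp [Finset.length_sort])
  set E : Fin d → ℕ := fun i => if i ∈ S then a i else if i = t then j else 1 with hEdef
  have hE1 : ∀ i, 1 ≤ E i := by
    intro i
    simp only [hEdef]
    split
    · exact ha i ‹_›
    · split
      · exact hj
      · exact le_refl 1
  set y : Fin d → R := fun kk => x (σ kk) ^ E (σ kk) with hy
  have hySOP : IsSOP R y := isSOP_comp_pow_s9 hx σ hσsurj E hE1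
  have hQup : Qup y c = Ideal.span ((fun i => x i ^ a i) '' ↑S) := by
    unfold Qup
    congr 1
    ext z
    constructor
    · rintro ⟨kk, hkk, rfl⟩
      have hkS := hget1 kk hkk
      refine ⟨σ kk, hkS, ?_⟩
      simp only [hy, hEdef]
      rw [if_pos hkS]
      
    · rintro ⟨i, hiS, rfl⟩
      have hiS' : i ∈ S := hiS
      obtain ⟨kk, hkkc, hkki⟩ := hget2 i hiS'
      refine ⟨kk, hkkc, ?_⟩
      simp only [hy, hEdef, hkki]
      rw [if_pos hiS']
  have hyc : y ⟨c, hcd⟩ = x t ^ j := by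
    simp only [hy, hEdef, hgetc]
    simp [ht]
  have hb : bIdeal R d ≤ Submodule.colon (Qup y c)
      (Submodule.colon (Qup y c) (Ideal.span {y ⟨c, hcd⟩})) := by
    unfold bIdeal
    refine le_trans (iInf_le _ y) ?_
    refine le_trans (iInf_le _ hySOP) ?_
    exact iInf_le _ (⟨c, hcd⟩ : Fin d)
  rw [hQup, hyc] at hb
  rw [Ideal.mul_le]
  intro r hr z hz
  have hfin := Submodule.mem_colon.1 (hb hr) z hz
  rwa [smul_eq_mul] at hfin

lemma telescope {x : Fin d → R} {s n : ℕ} (hsd : s < d) (hn : 1 ≤ n)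
    (K B : Ideal R)
    (CC : ∀ m j : ℕ, 1 ≤ m → 1 ≤ j →
      B * Submodule.colon (Qup x s ^ m ⊔ K) (Ideal.span {x ⟨s, hsd⟩ ^ j})
        ≤ Qup x s ^ m ⊔ K) :
    B * (⨅ (j : ℕ) (_ : 1 ≤ j) (_ : j ≤ n),
        (Qup x s ^ (n - j + 1) ⊔ (Ideal.span {x ⟨s, hsd⟩ ^ j} ⊔ K)))
      ≤ Qup x (s+1) ^ n ⊔ K := by
  have hQQ' : Qup x s ≤ Qup x (s+1) := by
    unfold Qup
    apply Ideal.span_mono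
    apply Set.image_mono
    intro i hi
    exact lt_of_lt_of_le hi (Nat.le_succ s)
  have hxQ' : x ⟨s, hsd⟩ ∈ Qup x (s+1) :=
    Ideal.subset_span ⟨⟨s, hsd⟩, by simp, rfl⟩
  rw [Ideal.mul_le]
  intro g hg U hU
  have hUj : ∀ j : ℕ, 1 ≤ j → j ≤ n →
      U ∈ Qup x s ^ (n - j + 1) ⊔ (Ideal.span {x ⟨s, hsd⟩ ^ j} ⊔ K) := by
    intro j h1 h2
    have h3 := hU
    rw [Submodule.mem_iInf] at h3
    have h4 := h3 j
    rw [Submodule.mem_iInf] at h4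
    have h5 := h4 h1
    rw [Submodule.mem_iInf] at h5
    exact h5 h2
  have hdec : ∀ j : ℕ, ∃ vv : R × R × R, (1 ≤ j → j ≤ n →
      vv.1 ∈ Qup x s ^ (n - j + 1) ∧ vv.2.2 ∈ K
        ∧ U = vv.1 + vv.2.1 * x ⟨s, hsd⟩ ^ j + vv.2.2) := by
    intro j
    by_cases hcase : 1 ≤ j ∧ j ≤ n
    · obtain ⟨vj, hv, rest, hrest, hvrest⟩ := Submodule.mem_sup.1 (hUj j hcase.1 hcase.2)
      obtain ⟨e, he, kvj, hkv, hekv⟩ := Submodule.mem_sup.1 hrest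
      obtain ⟨wj, hw⟩ := Ideal.mem_span_singleton'.1 he
      refine ⟨⟨vj, wj, kvj⟩, fun _ _ => ⟨hv, hkv, ?_⟩⟩
      show U = vj + wj * x ⟨s, hsd⟩ ^ j + kvj
      rw [← hvrest, ← hekv, ← hw, add_assoc]
    · exact ⟨⟨0, 0, 0⟩, fun h1 h2 => absurd ⟨h1, h2⟩ hcase⟩
  choose vv hvwk using hdec
  set v : ℕ → R := fun j => (vv j).1 with hv
  set w : ℕ → R := fun j => (vv j).2.1 with hw
  set kv : ℕ → R := fun j => (vv j).2.2 with hkv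
  have tel : ∀ i : ℕ, ∀ j : ℕ, j + i = n → 1 ≤ j →
      g * (w j * x ⟨s, hsd⟩ ^ j) ∈ Qup x (s+1) ^ n ⊔ K := by
    intro i
    induction i with
    | zero =>
      intro j hj hj1
      have hjn : j = n := by omega
      subst hjn
      apply Submodule.mem_sup_left
      have hmem : x ⟨s, hsd⟩ ^ j ∈ Qup x (s+1) ^ j := Ideal.pow_mem_pow hxQ' j
      have h2 : g * (w j * x ⟨s, hsd⟩ ^ j) = (g * w j) * x ⟨s, hsd⟩ ^ j := by ring
      rw [h2]
      exact Ideal.mul_mem_left _ _ hmem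
    | succ i ihi =>
      intro j hj hj1
      obtain ⟨hv1, hkv1, hU1⟩ := hvwk j hj1 (by omega)
      obtain ⟨hv2, hkv2, hU2⟩ := hvwk (j+1) (by omega) (by omega)
      have hz : (w j - w (j+1) * x ⟨s, hsd⟩) * x ⟨s, hsd⟩ ^ j
          ∈ Qup x s ^ (n - j) ⊔ K := by
        have heq : (w j - w (j+1) * x ⟨s, hsd⟩) * x ⟨s, hsd⟩ ^ j
            = (v (j+1) - v j) + (kv (j+1) - kv j) := by
          have h12 : v j + w j * x ⟨s, hsd⟩ ^ j + kv j
              = v (j+1) + w (j+1) * x ⟨s, hsd⟩ ^ (j+1) + kv (j+1) := by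
            rw [← hU1, ← hU2]
          linear_combination h12
        rw [heq]
        have hv2' : v (j+1) ∈ Qup x s ^ (n - j) := by
          have hh : n - (j+1) + 1 = n - j := by omega
          rwa [hh] at hv2
        have hv1' : v j ∈ Qup x s ^ (n - j) :=
          Ideal.pow_le_pow_right (by omega) hv1
        exact Submodule.add_mem _
          (Submodule.mem_sup_left (Submodule.sub_mem _ hv2' hv1'))
          (Submodule.mem_sup_right (Submodule.sub_mem _ hkv2 hkv1))
      have hzc : w j - w (j+1) * x ⟨s, hsd⟩ ∈
          Submodule.colon (Qup x s ^ (n - j) ⊔ K) (Ideal.span {x ⟨s, hsd⟩ ^ j}) := by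
        rw [show (Ideal.span {x ⟨s, hsd⟩ ^ j} : Ideal R)
            = Submodule.span R {x ⟨s, hsd⟩ ^ j} from rfl,
          Submodule.mem_colon_span_singleton, smul_eq_mul]
        exact hz
      have hgz : g * (w j - w (j+1) * x ⟨s, hsd⟩) ∈ Qup x s ^ (n - j) ⊔ K :=
        Ideal.mul_le.1 (CC (n - j) j (by omega) hj1) g hg _ hzc
      obtain ⟨q, hq, κ, hκ, hqκ⟩ := Submodule.mem_sup.1 hgz
      have hsplit : g * (w j * x ⟨s, hsd⟩ ^ j)
          = g * (w (j+1) * x ⟨s, hsd⟩ ^ (j+1)) + q * x ⟨s, hsd⟩ ^ j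
            + κ * x ⟨s, hsd⟩ ^ j := by
        linear_combination (-(x ⟨s, hsd⟩ ^ j)) * hqκ
      rw [hsplit]
      apply Submodule.add_mem
      apply Submodule.add_mem
      · exact ihi (j+1) (by omega) (by omega)
      · apply Submodule.mem_sup_left
        have hq' : q * x ⟨s, hsd⟩ ^ j ∈ Qup x (s+1) ^ (n - j) * Qup x (s+1) ^ j :=
          Ideal.mul_mem_mul (Ideal.pow_right_mono hQQ' _ hq) (Ideal.pow_mem_pow hxQ' j)
        rw [← pow_add] at hq'
        have hnj : n - j + j = n := by omega
        rwa [hnj] at hq'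
      · exact Submodule.mem_sup_right (Ideal.mul_mem_right _ _ hκ)
  obtain ⟨hv1, hkv1, hU1⟩ := hvwk 1 le_rfl hn
  have hUsplit : g * U = g * v 1 + g * (w 1 * x ⟨s, hsd⟩ ^ 1) + g * kv 1 := by
    rw [hU1]; ring
  rw [hUsplit]
  apply Submodule.add_mem
  apply Submodule.add_mem
  · apply Submodule.mem_sup_left
    have hvn : v 1 ∈ Qup x s ^ n := by
      have hh : n - 1 + 1 = n := by omega
      rwa [hh] at hv1
    exact Ideal.mul_mem_left _ _ (Ideal.pow_right_mono hQQ' n hvn)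
  · exact tel (n - 1) 1 (by omega) le_rfl
  · exact Submodule.mem_sup_right (Ideal.mul_mem_left _ _ hkv1)

lemma main_aux {x : Fin d → R} (hx : IsSOP R x) :
    ∀ s : ℕ, 1 ≤ s → s ≤ d → ∀ n : ℕ, 1 ≤ n → ∀ T : Finset (Fin d),
      (∀ i ∈ T, s ≤ (i : ℕ)) → ∀ k : Fin d → ℕ, (∀ i ∈ T, 1 ≤ k i) →
      bIdeal R d ^ (2 ^ (s - 1) - 1) *
        (⨅ (β : Fin d → ℕ) (_ : IsLam s n β),
          (PQ x s β ⊔ Ideal.span ((fun i => x i ^ k i) '' ↑T)))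
        ≤ Qup x s ^ n ⊔ Ideal.span ((fun i => x i ^ k i) '' ↑T) := by
  intro s hs1
  induction s, hs1 using Nat.le_induction with
  | base =>
    intro hsd n hn T hT k hk
    simp only [pow_zero, pow_one, Nat.sub_self, one_mul]
    have h01 : (0 : ℕ) < d := hsd
    have hlam : IsLam 1 n (fun _ : Fin d => n) := by
      constructor
      · intro i _; exact hn
      · rw [fin_filter_succ h01]
        have : Finset.univ.filter (fun i : Fin d => (i : ℕ) < 0) = ∅ := by
          ext i; simp
        rw [this, Finset.sum_insert (Finset.notMem_empty _), Finset.sum_empty]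
        omega
    refine le_trans (iInf₂_le (fun _ => n) hlam) ?_
    have hset : {i : Fin d | (i : ℕ) < 1} = {(⟨0, h01⟩ : Fin d)} := by
      ext i; simp [Fin.ext_iff]
    have hPQ : PQ x 1 (fun _ => n) = Qup x 1 ^ n := by
      unfold PQ Qup
      rw [hset, Set.image_singleton, Set.image_singleton, Ideal.span_singleton_pow]
    rw [hPQ]
  | succ s hs1 ih =>
    intro hs1d n hn T hT k hk
    have hsd : s ≤ d := le_trans (Nat.le_succ s) hs1d
    have hslt : s < d := hs1d
    have harith : 2 ^ (s + 1 - 1) - 1 = (2 ^ (s - 1) - 1 + 1) + (2 ^ (s - 1) - 1) := by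
      have h2 : (1:ℕ) ≤ 2 ^ (s - 1) := Nat.one_le_two_pow
      have h3 : 2 ^ s = 2 ^ (s - 1) * 2 := by
        rw [← pow_succ]
        congr 1
        omega
      simp only [Nat.add_sub_cancel]
      omega
    rw [harith, pow_add, mul_assoc]
    have hfs_notT : (⟨s, hslt⟩ : Fin d) ∉ T := by
      intro hmem
      have := hT _ hmem
      simp at this
    -- Part C : colon killing
    have CC : ∀ m j : ℕ, 1 ≤ m → 1 ≤ j →
        bIdeal R d ^ (2 ^ (s - 1) - 1 + 1) *
          Submodule.colon (Qup x s ^ m ⊔ Ideal.span ((fun i => x i ^ k i) '' ↑T))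
            (Ideal.span {x ⟨s, hslt⟩ ^ j})
          ≤ Qup x s ^ m ⊔ Ideal.span ((fun i => x i ^ k i) '' ↑T) := by
      intro m j hm hj
      rw [pow_succ, mul_assoc]
      have h1 : bIdeal R d *
          Submodule.colon (Qup x s ^ m ⊔ Ideal.span ((fun i => x i ^ k i) '' ↑T))
            (Ideal.span {x ⟨s, hslt⟩ ^ j})
          ≤ ⨅ (β : Fin d → ℕ) (_ : IsLam s m β),
              (PQ x s β ⊔ Ideal.span ((fun i => x i ^ k i) '' ↑T)) := by
        apply le_iInf₂
        intro β hβ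
        have hmono : Submodule.colon (Qup x s ^ m ⊔ Ideal.span ((fun i => x i ^ k i) '' ↑T))
              (Ideal.span {x ⟨s, hslt⟩ ^ j})
            ≤ Submodule.colon (PQ x s β ⊔ Ideal.span ((fun i => x i ^ k i) '' ↑T))
              (Ideal.span {x ⟨s, hslt⟩ ^ j}) :=
          colon_mono_left (sup_le_sup_right (pow_le_PQ m hm hsd hβ) _)
        have ha : ∀ i ∈ Finset.univ.filter (fun i : Fin d => (i : ℕ) < s) ∪ T,
            1 ≤ (if (i : ℕ) < s then β i else k i) := by
          intro i hi
          rcases Finset.mem_union.1 hi with h | h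
          · rw [if_pos (by simpa using h)]
            exact hβ.1 i (by simpa using h)
          · rw [if_neg (by have := hT i h; omega)]
            exact hk i h
        have hts : (⟨s, hslt⟩ : Fin d) ∉
            Finset.univ.filter (fun i : Fin d => (i : ℕ) < s) ∪ T := by
          intro hmem
          rcases Finset.mem_union.1 hmem with h | h
          · simp at h
          · exact hfs_notT h
        have hck := colon_key hx (Finset.univ.filter (fun i : Fin d => (i : ℕ) < s) ∪ T)
            (fun i => if (i : ℕ) < s then β i else k i) ha ⟨s, hslt⟩ hts j hj
        have hSeq : Ideal.span ((fun i => x i ^ (if (i : ℕ) < s then β i else k i)) ''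
              ↑(Finset.univ.filter (fun i : Fin d => (i : ℕ) < s) ∪ T))
            = PQ x s β ⊔ Ideal.span ((fun i => x i ^ k i) '' ↑T) := by
          rw [Finset.coe_union, Set.image_union, Ideal.span_union]
          congr 1
          · unfold PQ
            have hc : (↑(Finset.univ.filter (fun i : Fin d => (i : ℕ) < s)) : Set (Fin d))
                = {i : Fin d | (i : ℕ) < s} := by
              ext i; simp
            rw [hc]
            congr 1
            apply Set.image_congr
            intro i hi
            show x i ^ (if (i : ℕ) < s then β i else k i) = x i ^ β i
            rw [if_pos (show (i : ℕ) < s from hi)]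
          · congr 1
            apply Set.image_congr
            intro i hi
            show x i ^ (if (i : ℕ) < s then β i else k i) = x i ^ k i
            rw [if_neg (by have := hT i (Finset.mem_coe.1 hi); omega)]
        rw [hSeq] at hck
        exact le_trans (Ideal.mul_mono_right hmono) hck
      refine le_trans (Ideal.mul_mono_right h1) ?_
      exact ih hsd m hm T (fun i hi => le_trans (Nat.le_succ s) (hT i hi)) k hk
    -- Part A
    have stepA : bIdeal R d ^ (2 ^ (s - 1) - 1) *
        (⨅ (β : Fin d → ℕ) (_ : IsLam (s + 1) n β),
          (PQ x (s + 1) β ⊔ Ideal.span ((fun i => x i ^ k i) '' ↑T)))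
        ≤ ⨅ (j : ℕ) (_ : 1 ≤ j) (_ : j ≤ n),
            (Qup x s ^ (n - j + 1) ⊔
              (Ideal.span {x ⟨s, hslt⟩ ^ j} ⊔ Ideal.span ((fun i => x i ^ k i) '' ↑T))) := by
      apply le_iInf
      intro j
      apply le_iInf
      intro hj1
      apply le_iInf
      intro hjn
      have hT' : ∀ i ∈ insert (⟨s, hslt⟩ : Fin d) T, s ≤ (i : ℕ) := by
        intro i hi
        rcases Finset.mem_insert.1 hi with rfl | h
        · simp
        · exact le_trans (Nat.le_succ s) (hT i h)
      have hk' : ∀ i ∈ insert (⟨s, hslt⟩ : Fin d) T,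
          1 ≤ (if i = ⟨s, hslt⟩ then j else k i) := by
        intro i hi
        rcases Finset.mem_insert.1 hi with rfl | h
        · rw [if_pos rfl]; exact hj1
        · rw [if_neg (fun hh : i = ⟨s, hslt⟩ => hfs_notT (hh ▸ h))]
          exact hk i h
      have happ := ih hsd (n - j + 1) (by omega) (insert (⟨s, hslt⟩ : Fin d) T) hT'
          (fun i => if i = ⟨s, hslt⟩ then j else k i) hk'
      have hins : Ideal.span ((fun i => x i ^ (if i = ⟨s, hslt⟩ then j else k i)) ''
            ↑(insert (⟨s, hslt⟩ : Fin d) T))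
          = Ideal.span {x ⟨s, hslt⟩ ^ j} ⊔ Ideal.span ((fun i => x i ^ k i) '' ↑T) := by
        rw [Finset.coe_insert, Set.image_insert_eq, Ideal.span_insert]
        congr 1
        · congr 1
          simp
        · congr 1
          apply Set.image_congr
          intro i hi
          show x i ^ (if i = ⟨s, hslt⟩ then j else k i) = x i ^ k i
          rw [if_neg (fun hh : i = ⟨s, hslt⟩ => hfs_notT (hh ▸ (Finset.mem_coe.1 hi)))]
      rw [hins] at happ
      refine le_trans ?_ happ
      apply Ideal.mul_mono_right
      apply le_iInf₂
      intro β hβ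
      have hαlam : IsLam (s + 1) n (fun i : Fin d => if (i : ℕ) < s then β i else j) := by
        constructor
        · intro i hi
          show (1:ℕ) ≤ if (i : ℕ) < s then β i else j
          by_cases h : (i : ℕ) < s
          · rw [if_pos h]; exact hβ.1 i h
          · rw [if_neg h]; exact hj1
        · rw [fin_filter_succ hslt, Finset.sum_insert (by simp)]
          simp only []
          have hcong : (∑ i ∈ Finset.univ.filter (fun i : Fin d => (i : ℕ) < s),
              (if (i : ℕ) < s then β i else j))
              = ∑ i ∈ Finset.univ.filter (fun i : Fin d => (i : ℕ) < s), β i :=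
            Finset.sum_congr rfl (fun i hi => by
              rw [if_pos (by simpa using hi)])
          rw [hcong, hβ.2]
          have h0 : (if ((⟨s, hslt⟩ : Fin d) : ℕ) < s then β ⟨s, hslt⟩ else j) = j := by
            rw [if_neg (by simp)]
          rw [h0]
          omega
      refine le_trans (iInf₂_le (fun i : Fin d => if (i : ℕ) < s then β i else j) hαlam) ?_
      have hPQα : PQ x (s + 1) (fun i : Fin d => if (i : ℕ) < s then β i else j)
          = Ideal.span {x ⟨s, hslt⟩ ^ j} ⊔ PQ x s β := by
        unfold PQ
        rw [set_lt_succ hslt, Set.image_insert_eq, Ideal.span_insert]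
        congr 1
        · congr 1
          simp
        · congr 1
          apply Set.image_congr
          intro i hi
          show x i ^ (if (i : ℕ) < s then β i else j) = x i ^ β i
          rw [if_pos (show (i : ℕ) < s from hi)]
      rw [hPQα, sup_comm (Ideal.span {x ⟨s, hslt⟩ ^ j}) (PQ x s β), sup_assoc]
    exact le_trans (Ideal.mul_mono_right stepA)
      (telescope hslt hn (Ideal.span ((fun i => x i ^ k i) '' ↑T))
        (bIdeal R d ^ (2 ^ (s - 1) - 1 + 1)) CC)

end Helpers

theorem stmt9 {R : Type*} [CommRing R] [IsLocalRing R] [IsNoetherianRing R] {d : ℕ}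
    (hd : ringKrullDim R = d) (x : Fin d → R) (hx : IsSOP R x)
    (s : ℕ) (hs : 1 ≤ s) (hsd : s ≤ d) (n : ℕ) (hn : 1 ≤ n) :
    bIdeal R d ^ (2 ^ (s - 1) - 1) * (⨅ (α : Fin d → ℕ) (_ : IsLam s n α), PQ x s α)
      ≤ Qup x s ^ n := by
  have h := main_aux hx s hs hsd n hn ∅ (by simp) (fun _ => 1) (by simp)
  simpa only [Finset.coe_empty, Set.image_empty, Ideal.span_empty, sup_bot_eq] using h
end
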